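/- arXiv:1903.02385 — 3 statements merged into one kernel-verified Lean document; each statement's English description precedes it below -/
import Mathlib

section
/- There is a unique a₀ > 0 such that g(a₀) = B·a₀. Moreover, if v : ℝ → ℝ is a C⁴ positive solution of the ODE v''''(t) − A·v''(t) + B·v(t) = g(v(t)) on ℝ, then inf_{t ∈ ℝ} v(t) ≤ a₀, and inf_{t ∈ ℝ} v(t) = a₀ if and only if v is the constant function a₀. -/
open Real Filter Set

noncomputable section

lemma mono_Ici (f f' : ℝ → ℝ) (hf : ∀ t, HasDerivAt f (f' t) t) (T : ℝ)
    (h : ∀ t, T ≤ t → 0 ≤ f' t) : ∀ ⦃s t : ℝ⦄, T ≤ s → s ≤ t → f s ≤ f t := by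
  intro s t hs hst
  have H : MonotoneOn f (Ici T) := by
    apply monotoneOn_of_deriv_nonneg (convex_Ici T)
    · exact Continuous.continuousOn (by
        rw [continuous_iff_continuousAt]; exact fun x => (hf x).continuousAt)
    · exact fun x hx => (hf x).differentiableAt.differentiableWithinAt
    · intro x hx
      rw [interior_Ici] at hx
      rw [(hf x).deriv]
      exact h x (le_of_lt hx)
  exact H hs (le_trans hs hst) hst

lemma lin_lower (f f' : ℝ → ℝ) (hf : ∀ t, HasDerivAt f (f' t) t) (T K : ℝ)
    (h : ∀ t, T ≤ t → K ≤ f' t) : ∀ t, T ≤ t → f T + K * (t - T) ≤ f t := by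
  intro t ht
  have := mono_Ici (fun u => f u - K * u) (fun u => f' u - K)
    (fun u => ((hf u).sub ((hasDerivAt_id u).const_mul K)).congr_deriv (by ring)) T
    (fun u hu => by show (0:ℝ) ≤ f' u - K; have := h u hu; linarith) le_rfl ht
  linarith

lemma gron (p p1 p2 : ℝ → ℝ) (hp : ∀ t, HasDerivAt p (p1 t) t)
    (hp1 : ∀ t, HasDerivAt p1 (p2 t) t) (α : ℝ) (hα : 0 < α)
    (hineq : ∀ t, α ^ 2 * p t ≤ p2 t) (t₀ : ℝ) (hp0 : 0 < p t₀)
    (hu0 : 0 < p1 t₀ + α * p t₀) :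
    ∀ t, t₀ ≤ t → (p1 t₀ + α * p t₀) / 2 * (t - t₀) ≤ p t := by
  intro t ht
  set U := p1 t₀ + α * p t₀ with hU
  have hu : ∀ s, HasDerivAt (fun r => Real.exp (-(α * r)) * (p1 r + α * p r))
      (Real.exp (-(α * s)) * (p2 s - α ^ 2 * p s)) s := by
    intro s
    have h1 : HasDerivAt (fun r => Real.exp (-(α * r))) (Real.exp (-(α * s)) * (-α)) s := by
      have : HasDerivAt (fun r : ℝ => -(α * r)) (-α) s :=
        ((hasDerivAt_id s).const_mul α).neg.congr_deriv (by ring)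
      exact (Real.hasDerivAt_exp _).comp s this
    have h2 : HasDerivAt (fun r => p1 r + α * p r) (p2 s + α * p1 s) s :=
      (hp1 s).add ((hp s).const_mul α)
    exact (h1.mul h2).congr_deriv (by ring)
  have hmon := mono_Ici _ _ hu t₀ (fun s _ =>
    mul_nonneg (Real.exp_pos _).le (by linarith [hineq s]))
  have key1 : ∀ s, t₀ ≤ s → U * Real.exp (α * (s - t₀)) ≤ p1 s + α * p s := by
    intro s hs
    have h : Real.exp (-(α * t₀)) * U ≤ Real.exp (-(α * s)) * (p1 s + α * p s) := hmon le_rfl hs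
    have h2 := mul_le_mul_of_nonneg_left h (le_of_lt (Real.exp_pos (α * s)))
    have e1 : Real.exp (α * s) * (Real.exp (-(α * s)) * (p1 s + α * p s)) = p1 s + α * p s := by
      rw [← mul_assoc, ← Real.exp_add]; simp
    have e2 : Real.exp (α * s) * (Real.exp (-(α * t₀)) * U) = Real.exp (α * (s - t₀)) * U := by
      rw [← mul_assoc, ← Real.exp_add]; congr 2; ring
    rw [e1, e2] at h2
    linarith
  have hw : ∀ s, HasDerivAt (fun r => Real.exp (α * r) * p r)
      (Real.exp (α * s) * (p1 s + α * p s)) s := by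
    intro s
    have h1 : HasDerivAt (fun r => Real.exp (α * r)) (Real.exp (α * s) * α) s := by
      have : HasDerivAt (fun r : ℝ => α * r) α s :=
        ((hasDerivAt_id s).const_mul α).congr_deriv (by ring)
      exact (Real.hasDerivAt_exp _).comp s this
    exact (h1.mul (hp s)).congr_deriv (by ring)
  have hΦ : ∀ s, HasDerivAt (fun r => U * Real.exp (-(α * t₀)) * Real.exp (2 * α * r) / (2 * α))
      (U * Real.exp (-(α * t₀)) * Real.exp (2 * α * s)) s := by
    intro s
    have h1 : HasDerivAt (fun r : ℝ => Real.exp (2 * α * r)) (Real.exp (2 * α * s) * (2 * α)) s := by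
      have : HasDerivAt (fun r : ℝ => 2 * α * r) (2 * α) s :=
        ((hasDerivAt_id s).const_mul (2 * α)).congr_deriv (by ring)
      exact (Real.hasDerivAt_exp _).comp s this
    have h2 := (h1.const_mul (U * Real.exp (-(α * t₀)))).div_const (2 * α)
    refine h2.congr_deriv ?_
    field_simp
  have hdiff : ∀ s, HasDerivAt
      (fun r => Real.exp (α * r) * p r - U * Real.exp (-(α * t₀)) * Real.exp (2 * α * r) / (2 * α))
      (Real.exp (α * s) * (p1 s + α * p s) - U * Real.exp (-(α * t₀)) * Real.exp (2 * α * s)) s :=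
    fun s => (hw s).sub (hΦ s)
  have hmon2 := mono_Ici _ _ hdiff t₀ (fun s hs => by
    have hk := key1 s hs
    have h5 : Real.exp (α * s) * (U * Real.exp (α * (s - t₀))) ≤
        Real.exp (α * s) * (p1 s + α * p s) :=
      mul_le_mul_of_nonneg_left hk (le_of_lt (Real.exp_pos _))
    have heq : Real.exp (α * s) * (U * Real.exp (α * (s - t₀))) =
        U * Real.exp (-(α * t₀)) * Real.exp (2 * α * s) := by
      rw [mul_comm U (Real.exp (α * (s - t₀))), ← mul_assoc, ← Real.exp_add,
        mul_comm U (Real.exp (-(α * t₀))), mul_comm _ (Real.exp (2 * α * s)), ← mul_assoc,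
        ← Real.exp_add]
      congr 2
      ring
    rw [heq] at h5
    linarith)
  have h3 := hmon2 le_rfl ht
  set E0 := Real.exp (α * t₀) with hE0def
  set Z := Real.exp (-(α * t₀)) with hZdef
  set X := Real.exp (α * (t - t₀)) with hXdef
  set Y := Real.exp (-(α * (t - t₀))) with hYdef
  have hE0 : 0 < E0 := Real.exp_pos _
  have hZE : Z * E0 = 1 := by rw [hZdef, hE0def, ← Real.exp_add]; simp
  have hXY : X * Y = 1 := by rw [hXdef, hYdef, ← Real.exp_add]; simp
  have hY0 : 0 < Y := Real.exp_pos _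
  have hY1 : Y ≤ 1 := by
    rw [hYdef, Real.exp_le_one_iff]
    nlinarith
  have hXge : 1 + α * (t - t₀) ≤ X := by
    rw [hXdef]
    have := Real.add_one_le_exp (α * (t - t₀))
    linarith
  have eA : Real.exp (α * t) = E0 * X := by
    rw [hE0def, hXdef, ← Real.exp_add]; congr 1; ring
  have eB : Real.exp (2 * α * t) = (E0 * X) ^ 2 := by
    have h6 : Real.exp (2 * α * t) = Real.exp (α * t) * Real.exp (α * t) := by
      rw [← Real.exp_add]; congr 1; ring
    rw [h6, eA]; ring
  have eC : Real.exp (2 * α * t₀) = E0 * E0 := by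
    rw [hE0def, ← Real.exp_add]; congr 1; ring
  rw [eA, eB, eC] at h3
  have e5 : U * Z * (E0 * E0) / (2 * α) = U * E0 / (2 * α) := by
    calc U * Z * (E0 * E0) / (2 * α) = Z * E0 * (U * E0) / (2 * α) := by ring
      _ = U * E0 / (2 * α) := by rw [hZE]; ring
  have e6 : U * Z * (E0 * X) ^ 2 / (2 * α) = U * E0 * X ^ 2 / (2 * α) := by
    calc U * Z * (E0 * X) ^ 2 / (2 * α) = Z * E0 * (U * E0 * X ^ 2) / (2 * α) := by ring
      _ = U * E0 * X ^ 2 / (2 * α) := by rw [hZE]; ring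
  rw [e5, e6] at h3
  have d1 : p t₀ - U / (2 * α) ≤ X * p t - U * X ^ 2 / (2 * α) := by
    apply le_of_mul_le_mul_left _ hE0
    calc E0 * (p t₀ - U / (2 * α)) = E0 * p t₀ - U * E0 / (2 * α) := by ring
      _ ≤ E0 * X * p t - U * E0 * X ^ 2 / (2 * α) := by linarith
      _ = E0 * (X * p t - U * X ^ 2 / (2 * α)) := by ring
  have d2 : (p t₀ - U / (2 * α)) * Y ≤ (X * p t - U * X ^ 2 / (2 * α)) * Y :=
    mul_le_mul_of_nonneg_right d1 hY0.le
  have eRY : (X * p t - U * X ^ 2 / (2 * α)) * Y = (X * Y) * p t - U * X * (X * Y) / (2 * α) := by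
    ring
  rw [eRY, hXY] at d2
  simp only [one_mul, mul_one] at d2
  have h2α : (0:ℝ) < 2 * α := by linarith
  have ecanc : U / (2 * α) * (1 + α * (t - t₀)) - U / (2 * α) = U / 2 * (t - t₀) := by
    field_simp; ring
  have f1 : 0 ≤ p t₀ * Y := mul_nonneg hp0.le hY0.le
  have f2 : U / (2 * α) * Y ≤ U / (2 * α) := by
    have := mul_le_mul_of_nonneg_left hY1 (le_of_lt (div_pos hu0 h2α))
    linarith
  have f3 : U / (2 * α) * (1 + α * (t - t₀)) ≤ U / (2 * α) * X :=
    mul_le_mul_of_nonneg_left hXge (div_nonneg hu0.le h2α.le)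
  -- d2 : (p t₀ - U/(2α)) * Y ≤ p t - U * X / (2α)
  have expand : (p t₀ - U / (2 * α)) * Y = p t₀ * Y - U / (2 * α) * Y := by ring
  rw [expand] at d2
  have e7 : U * X / (2 * α) = U / (2 * α) * X := by ring
  rw [e7] at d2
  linarith

set_option maxHeartbeats 1000000 in
lemma blowup (v v1 v2 v3 v4 : ℝ → ℝ)
    (hD0 : ∀ t, HasDerivAt v (v1 t) t) (hD1 : ∀ t, HasDerivAt v1 (v2 t) t)
    (hD2 : ∀ t, HasDerivAt v2 (v3 t) t) (hD3 : ∀ t, HasDerivAt v3 (v4 t) t)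
    (hvpos : ∀ t, 0 < v t)
    (c q R : ℝ) (hc : 0 < c) (hq : 1 < q) (hR : 1 ≤ R)
    (hode : ∀ t, R ≤ v t → 0 ≤ v2 t → c * v t ^ q ≤ v4 t)
    (κ t₀ : ℝ) (hκ : 0 < κ) (hlin : ∀ t, t₀ ≤ t → κ * (t - t₀) ≤ v2 t) : False := by
  have hκ' : 0 < 1 / κ := by positivity
  obtain ⟨T₁, hT₁⟩ : ∃ T, T = t₀ + 1 / κ := ⟨_, rfl⟩
  have hv2one : ∀ t, T₁ ≤ t → 1 ≤ v2 t := by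
    intro t ht
    have h1 : κ * (t - t₀) ≤ v2 t := hlin t (by linarith)
    have h2 : (1:ℝ) = κ * (1 / κ) := by field_simp
    have h3 : κ * (1 / κ) ≤ κ * (t - t₀) :=
      mul_le_mul_of_nonneg_left (by linarith) hκ.le
    linarith
  -- v1 grows
  have hlin1 := lin_lower v1 v2 hD1 T₁ 1 hv2one
  obtain ⟨T₂, hT₂⟩ : ∃ T, T = T₁ + |v1 T₁| + 1 := ⟨_, rfl⟩
  have hv1one : ∀ t, T₂ ≤ t → 1 ≤ v1 t := by
    intro t ht
    have h1 := hlin1 t (by linarith [abs_nonneg (v1 T₁)])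
    have := abs_nonneg (v1 T₁)
    have := neg_abs_le (v1 T₁)
    linarith
  -- v grows
  have hlinv := lin_lower v v1 hD0 T₂ 1 hv1one
  have grow_v : ∀ X : ℝ, ∃ T, T₂ ≤ T ∧ ∀ t, T ≤ t → X ≤ v t := by
    intro X
    refine ⟨T₂ + |v T₂| + |X|, by linarith [abs_nonneg (v T₂), abs_nonneg X], ?_⟩
    intro t ht
    have h1 := hlinv t (by linarith [abs_nonneg (v T₂), abs_nonneg X])
    have := neg_abs_le (v T₂)
    have := le_abs_self X
    linarith
  obtain ⟨T₃, hT₃, hvR⟩ := grow_v R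
  have hT₁₂ : T₁ ≤ T₂ := by rw [hT₂]; linarith [abs_nonneg (v1 T₁)]
  have hv2nn : ∀ t, T₃ ≤ t → 0 ≤ v2 t := fun t ht => by
    have := hv2one t (by linarith); linarith
  have hv4big : ∀ t, T₃ ≤ t → c * v t ^ q ≤ v4 t := fun t ht =>
    hode t (hvR t ht) (hv2nn t ht)
  have hvone : ∀ t, T₃ ≤ t → 1 ≤ v t := fun t ht => le_trans hR (hvR t ht)
  have hrpow_ge_one : ∀ (t : ℝ) (s : ℝ), T₃ ≤ t → 0 ≤ s → 1 ≤ v t ^ s := by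
    intro t s ht hs
    have h1 := hvone t ht
    calc (1:ℝ) = v t ^ (0:ℝ) := by rw [Real.rpow_zero]
      _ ≤ v t ^ s := Real.rpow_le_rpow_of_exponent_le h1 hs
  have hv4c : ∀ t, T₃ ≤ t → c ≤ v4 t := by
    intro t ht
    have h1 := hv4big t ht
    have h2 := hrpow_ge_one t q ht (by linarith)
    nlinarith
  have hlin3 := lin_lower v3 v4 hD3 T₃ c hv4c
  obtain ⟨T₄, hT₄⟩ : ∃ T, T = T₃ + (|v3 T₃| + 1) / c := ⟨_, rfl⟩
  have hv3one : ∀ t, T₄ ≤ t → 1 ≤ v3 t := by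
    intro t ht
    have hd : (0:ℝ) ≤ (|v3 T₃| + 1) / c := by positivity
    have h1 := hlin3 t (by linarith)
    have h2 : c * ((|v3 T₃| + 1) / c) = |v3 T₃| + 1 := by field_simp
    have h3 : c * ((|v3 T₃| + 1) / c) ≤ c * (t - T₃) :=
      mul_le_mul_of_nonneg_left (by linarith) hc.le
    have := neg_abs_le (v3 T₃)
    linarith
  have hT₃₄ : T₃ ≤ T₄ := by
    rw [hT₄]
    have : (0:ℝ) ≤ (|v3 T₃| + 1) / c := by positivity
    linarith
  -- Energy 1
  have hq1 : (0:ℝ) < q + 1 := by linarith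
  have hF₁ : ∀ t, HasDerivAt (fun r => v3 r * v1 r - 1/2 * (v2 r)^2 - c/(q+1) * v r ^ (q+1))
      ((v4 t - c * v t ^ q) * v1 t) t := by
    intro t
    have hpow : HasDerivAt (fun r => v r ^ (q+1)) (v1 t * (q+1) * v t ^ (q+1-1)) t :=
      (hD0 t).rpow_const (Or.inl (hvpos t).ne')
    have hmul : HasDerivAt (fun r => v3 r * v1 r) (v4 t * v1 t + v3 t * v2 t) t :=
      (hD3 t).mul (hD1 t)
    have hsq : HasDerivAt (fun r => (1:ℝ)/2 * (v2 r)^2) (1/2 * ((2:ℕ) * v2 t ^ (2-1) * v3 t)) t :=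
      ((hD2 t).pow 2).const_mul (1/2)
    have h := (hmul.sub hsq).sub (hpow.const_mul (c/(q+1)))
    refine h.congr_deriv ?_
    have e : v t ^ (q+1-1) = v t ^ q := by norm_num
    rw [e]
    have hq1' : q + 1 ≠ 0 := by linarith
    field_simp
    ring
  have mono1 := mono_Ici _ _ hF₁ T₄ (fun t ht => by
    have h1 := hv4big t (by linarith)
    have h2 := hv1one t (by linarith)
    exact mul_nonneg (by linarith) (by linarith))
  obtain ⟨C₁, hC₁⟩ : ∃ C, C = |v3 T₄ * v1 T₄ - 1/2 * (v2 T₄)^2 - c/(q+1) * v T₄ ^ (q+1)| :=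
    ⟨_, rfl⟩
  have bound1 : ∀ t, T₄ ≤ t → c/(q+1) * v t ^ (q+1) - C₁ ≤ v1 t * v3 t := by
    intro t ht
    have h1 := mono1 le_rfl ht
    have h2 := sq_nonneg (v2 t)
    have h3 : -C₁ ≤ v3 T₄ * v1 T₄ - 1/2 * (v2 T₄)^2 - c/(q+1) * v T₄ ^ (q+1) := by
      rw [hC₁]; exact neg_abs_le _
    nlinarith
  obtain ⟨c₂, hc₂⟩ : ∃ x, x = c/(2*(q+1)) := ⟨_, rfl⟩
  have hc₂0 : 0 < c₂ := by rw [hc₂]; positivity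
  obtain ⟨M₁, hM₁⟩ : ∃ x, x = 2*(q+1)/c * C₁ := ⟨_, rfl⟩
  obtain ⟨T₅', hT₅'a, hT₅'b⟩ := grow_v (max R M₁)
  obtain ⟨T₅, hT₅⟩ : ∃ T, T = max T₄ T₅' := ⟨_, rfl⟩
  have hT₄₅ : T₄ ≤ T₅ := by rw [hT₅]; exact le_max_left _ _
  have hT₅big : ∀ t, T₅ ≤ t → max R M₁ ≤ v t := fun t ht =>
    hT₅'b t (le_trans (by rw [hT₅]; exact le_max_right _ _) ht)
  have hvexp : ∀ t (s : ℝ), T₃ ≤ t → 1 ≤ s → v t ≤ v t ^ s := by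
    intro t s ht hs
    have h1 := hvone t ht
    calc v t = v t ^ (1:ℝ) := (Real.rpow_one _).symm
      _ ≤ v t ^ s := Real.rpow_le_rpow_of_exponent_le h1 hs
  have bound1' : ∀ t, T₅ ≤ t → c₂ * v t ^ (q+1) ≤ v1 t * v3 t := by
    intro t ht
    have h1 := bound1 t (by linarith)
    have hM : M₁ ≤ v t := le_trans (le_max_right _ _) (hT₅big t ht)
    have hvv : v t ≤ v t ^ (q+1) := hvexp t (q+1) (by linarith [hT₃, hT₃₄]) (by linarith)
    have h4 : c₂ * M₁ ≤ c₂ * v t ^ (q+1) :=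
      mul_le_mul_of_nonneg_left (by linarith) hc₂0.le
    have h5 : c₂ * M₁ = C₁ := by
      rw [hc₂, hM₁]
      have : C₁ = |v3 T₄ * v1 T₄ - 1/2 * (v2 T₄)^2 - c/(q+1) * v T₄ ^ (q+1)| := hC₁
      field_simp
    have h6 : c/(q+1) * v t ^ (q+1) = c₂ * v t ^ (q+1) + c₂ * v t ^ (q+1) := by
      rw [hc₂]; field_simp; ring
    nlinarith
  -- Energy 2
  have hq2 : (0:ℝ) < q + 2 := by linarith
  have hF₂ : ∀ t, HasDerivAt (fun r => (v1 r)^2 * v2 r - c₂/(q+2) * v r ^ (q+2))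
      (2 * v1 t * (v2 t)^2 + v1 t * (v1 t * v3 t - c₂ * v t ^ (q+1))) t := by
    intro t
    have hpow : HasDerivAt (fun r => v r ^ (q+2)) (v1 t * (q+2) * v t ^ (q+2-1)) t :=
      (hD0 t).rpow_const (Or.inl (hvpos t).ne')
    have hsq : HasDerivAt (fun r => (v1 r)^2) ((2:ℕ) * v1 t ^ (2-1) * v2 t) t := (hD1 t).pow 2
    have h := (hsq.mul (hD2 t)).sub (hpow.const_mul (c₂/(q+2)))
    refine h.congr_deriv ?_
    have e : v t ^ (q+2-1) = v t ^ (q+1) := by rw [show q+2-1 = q+1 from by ring]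
    rw [e]
    have hq2' : q + 2 ≠ 0 := by linarith
    field_simp
    ring
  have mono2 := mono_Ici _ _ hF₂ T₅ (fun t ht => by
    have h1 := bound1' t ht
    have h2 := hv1one t (by linarith)
    have h3 := sq_nonneg (v2 t)
    have h4 : 0 ≤ v1 t * (v1 t * v3 t - c₂ * v t ^ (q+1)) :=
      mul_nonneg (by linarith) (by linarith)
    have h5 : 0 ≤ 2 * v1 t * (v2 t)^2 := mul_nonneg (by linarith) h3
    linarith)
  obtain ⟨C₂, hC₂⟩ : ∃ C, C = |(v1 T₅)^2 * v2 T₅ - c₂/(q+2) * v T₅ ^ (q+2)| := ⟨_, rfl⟩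
  have bound2pre : ∀ t, T₅ ≤ t → c₂/(q+2) * v t ^ (q+2) - C₂ ≤ (v1 t)^2 * v2 t := by
    intro t ht
    have h1 := mono2 le_rfl ht
    have h3 : -C₂ ≤ (v1 T₅)^2 * v2 T₅ - c₂/(q+2) * v T₅ ^ (q+2) := by
      rw [hC₂]; exact neg_abs_le _
    nlinarith
  obtain ⟨c₃, hc₃⟩ : ∃ x, x = c₂/(2*(q+2)) := ⟨_, rfl⟩
  have hc₃0 : 0 < c₃ := by rw [hc₃]; positivity
  obtain ⟨M₂, hM₂⟩ : ∃ x, x = 2*(q+2)/c₂ * C₂ := ⟨_, rfl⟩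
  obtain ⟨T₆', hT₆'a, hT₆'b⟩ := grow_v (max R M₂)
  obtain ⟨T₆, hT₆⟩ : ∃ T, T = max T₅ T₆' := ⟨_, rfl⟩
  have hT₅₆ : T₅ ≤ T₆ := by rw [hT₆]; exact le_max_left _ _
  have hT₆big : ∀ t, T₆ ≤ t → max R M₂ ≤ v t := fun t ht =>
    hT₆'b t (le_trans (by rw [hT₆]; exact le_max_right _ _) ht)
  have bound2 : ∀ t, T₆ ≤ t → c₃ * v t ^ (q+2) ≤ (v1 t)^2 * v2 t := by
    intro t ht
    have h1 := bound2pre t (by linarith)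
    have hM : M₂ ≤ v t := le_trans (le_max_right _ _) (hT₆big t ht)
    have hvv : v t ≤ v t ^ (q+2) := hvexp t (q+2) (by linarith [hT₃, hT₃₄]) (by linarith)
    have h4 : c₃ * M₂ ≤ c₃ * v t ^ (q+2) := mul_le_mul_of_nonneg_left (by linarith) hc₃0.le
    have h5 : c₃ * M₂ = C₂ := by rw [hc₃, hM₂]; field_simp
    have h6 : c₂/(q+2) * v t ^ (q+2) = c₃ * v t ^ (q+2) + c₃ * v t ^ (q+2) := by
      rw [hc₃]; field_simp; ring
    nlinarith
  -- Energy 3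
  have hq3 : (0:ℝ) < q + 3 := by linarith
  have hF₃ : ∀ t, HasDerivAt (fun r => (v1 r)^4 - 4*c₃/(q+3) * v r ^ (q+3))
      (4 * v1 t * ((v1 t)^2 * v2 t - c₃ * v t ^ (q+2))) t := by
    intro t
    have hpow : HasDerivAt (fun r => v r ^ (q+3)) (v1 t * (q+3) * v t ^ (q+3-1)) t :=
      (hD0 t).rpow_const (Or.inl (hvpos t).ne')
    have h4p : HasDerivAt (fun r => (v1 r)^4) ((4:ℕ) * v1 t ^ (4-1) * v2 t) t := (hD1 t).pow 4
    have h := h4p.sub (hpow.const_mul (4*c₃/(q+3)))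
    refine h.congr_deriv ?_
    have e : v t ^ (q+3-1) = v t ^ (q+2) := by rw [show q+3-1 = q+2 from by ring]
    rw [e]
    have hq3' : q + 3 ≠ 0 := by linarith
    field_simp
    ring
  have mono3 := mono_Ici _ _ hF₃ T₆ (fun t ht => by
    have h1 := bound2 t ht
    have h2 := hv1one t (by linarith)
    have h4 : 0 ≤ 4 * v1 t * ((v1 t)^2 * v2 t - c₃ * v t ^ (q+2)) :=
      mul_nonneg (by linarith) (by linarith)
    linarith)
  obtain ⟨C₃, hC₃⟩ : ∃ C, C = |(v1 T₆)^4 - 4*c₃/(q+3) * v T₆ ^ (q+3)| := ⟨_, rfl⟩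
  have bound3pre : ∀ t, T₆ ≤ t → 4*c₃/(q+3) * v t ^ (q+3) - C₃ ≤ (v1 t)^4 := by
    intro t ht
    have h1 := mono3 le_rfl ht
    have h3 : -C₃ ≤ (v1 T₆)^4 - 4*c₃/(q+3) * v T₆ ^ (q+3) := by rw [hC₃]; exact neg_abs_le _
    nlinarith
  obtain ⟨c₄, hc₄⟩ : ∃ x, x = 2*c₃/(q+3) := ⟨_, rfl⟩
  have hc₄0 : 0 < c₄ := by rw [hc₄]; positivity
  obtain ⟨M₃, hM₃⟩ : ∃ x, x = (q+3)/(2*c₃) * C₃ := ⟨_, rfl⟩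
  obtain ⟨T₇', hT₇'a, hT₇'b⟩ := grow_v (max R M₃)
  obtain ⟨T₇, hT₇⟩ : ∃ T, T = max T₆ T₇' := ⟨_, rfl⟩
  have hT₆₇ : T₆ ≤ T₇ := by rw [hT₇]; exact le_max_left _ _
  have hT₇big : ∀ t, T₇ ≤ t → max R M₃ ≤ v t := fun t ht =>
    hT₇'b t (le_trans (by rw [hT₇]; exact le_max_right _ _) ht)
  have bound3 : ∀ t, T₇ ≤ t → c₄ * v t ^ (q+3) ≤ (v1 t)^4 := by
    intro t ht
    have h1 := bound3pre t (by linarith)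
    have hM : M₃ ≤ v t := le_trans (le_max_right _ _) (hT₇big t ht)
    have hvv : v t ≤ v t ^ (q+3) := hvexp t (q+3) (by linarith [hT₃, hT₃₄]) (by linarith)
    have h4 : c₄ * M₃ ≤ c₄ * v t ^ (q+3) := mul_le_mul_of_nonneg_left (by linarith) hc₄0.le
    have h5 : c₄ * M₃ = C₃ := by rw [hc₄, hM₃]; field_simp
    have h6 : 4*c₃/(q+3) * v t ^ (q+3) = c₄ * v t ^ (q+3) + c₄ * v t ^ (q+3) := by
      rw [hc₄]; field_simp; ring
    nlinarith
  -- fourth root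
  obtain ⟨c₅, hc₅⟩ : ∃ x, x = c₄ ^ ((1:ℝ)/4) := ⟨_, rfl⟩
  have hc₅0 : 0 < c₅ := by rw [hc₅]; exact Real.rpow_pos_of_pos hc₄0 _
  have bound4 : ∀ t, T₇ ≤ t → c₅ * v t ^ ((q+3)/4) ≤ v1 t := by
    intro t ht
    have hv1nn : (0:ℝ) ≤ v1 t := by linarith [hv1one t (by linarith)]
    have h2 : (c₄ * v t ^ (q+3)) ^ ((1:ℝ)/4) ≤ (((v1 t)^4 : ℝ)) ^ ((1:ℝ)/4) :=
      Real.rpow_le_rpow (mul_nonneg hc₄0.le (Real.rpow_pos_of_pos (hvpos t) _).le)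
        (bound3 t ht) (by norm_num)
    have hR1 : (((v1 t)^4 : ℝ)) ^ ((1:ℝ)/4) = v1 t := by
      rw [← Real.rpow_natCast (v1 t) 4, ← Real.rpow_mul hv1nn]
      norm_num
    have hL1 : (c₄ * v t ^ (q+3)) ^ ((1:ℝ)/4) = c₅ * v t ^ ((q+3)/4) := by
      rw [Real.mul_rpow hc₄0.le (Real.rpow_pos_of_pos (hvpos t) _).le, ← Real.rpow_mul (hvpos t).le, hc₅]
      congr 1
      ring
    rw [hR1, hL1] at h2
    exact h2
  -- final contradiction via N = v^(-η)
  obtain ⟨η, hηdef⟩ : ∃ x, x = (q-1)/4 := ⟨_, rfl⟩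
  have hη : 0 < η := by rw [hηdef]; linarith
  have hN : ∀ t, HasDerivAt (fun r => -(v r ^ (-η))) (-(v1 t * (-η) * v t ^ (-η-1))) t :=
    fun t => ((hD0 t).rpow_const (Or.inl (hvpos t).ne')).neg
  have hNbound : ∀ t, T₇ ≤ t → η * c₅ ≤ -(v1 t * (-η) * v t ^ (-η-1)) := by
    intro t ht
    have hb4 := bound4 t ht
    have hvp : (0:ℝ) < v t ^ (-η-1) := Real.rpow_pos_of_pos (hvpos t) _
    have h1 : c₅ * v t ^ ((q+3)/4) * v t ^ (-η-1) ≤ v1 t * v t ^ (-η-1) :=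
      mul_le_mul_of_nonneg_right hb4 hvp.le
    have h2 : v t ^ ((q+3)/4) * v t ^ (-η-1) = 1 := by
      rw [← Real.rpow_add (hvpos t)]
      have e : (q+3)/4 + (-η-1) = 0 := by rw [hηdef]; ring
      rw [e, Real.rpow_zero]
    have h3 : c₅ ≤ v1 t * v t ^ (-η-1) := by
      calc c₅ = c₅ * (v t ^ ((q+3)/4) * v t ^ (-η-1)) := by rw [h2]; ring
        _ = c₅ * v t ^ ((q+3)/4) * v t ^ (-η-1) := by ring
        _ ≤ v1 t * v t ^ (-η-1) := h1
    have h4 : η * c₅ ≤ η * (v1 t * v t ^ (-η-1)) := mul_le_mul_of_nonneg_left h3 hη.le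
    nlinarith
  have hlinN := lin_lower _ _ hN T₇ (η * c₅) hNbound
  obtain ⟨tst, htst⟩ : ∃ x, x = T₇ + (v T₇ ^ (-η) + 1)/(η * c₅) := ⟨_, rfl⟩
  have hNT₇ : (0:ℝ) < v T₇ ^ (-η) := Real.rpow_pos_of_pos (hvpos T₇) _
  have htstge : T₇ ≤ tst := by
    rw [htst]
    have : (0:ℝ) ≤ (v T₇ ^ (-η) + 1)/(η * c₅) := by positivity
    linarith
  have hfin := hlinN tst htstge
  have hcanc : η * c₅ * (tst - T₇) = v T₇ ^ (-η) + 1 := by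
    rw [htst]
    field_simp
    ring
  have hNpos : (0:ℝ) < v tst ^ (-η) := Real.rpow_pos_of_pos (hvpos tst) _
  nlinarith

lemma phi_mono (g : ℝ → ℝ) (hC : ContDiffOn ℝ 1 g (Set.Ioi 0))
    (hder : ∀ t > 0, g t / t < deriv g t) :
    StrictMonoOn (fun t => g t / t) (Set.Ioi 0) := by
  have hdiff : ∀ t ∈ Set.Ioi (0:ℝ), DifferentiableAt ℝ g t := fun t ht =>
    ((hC.differentiableOn one_ne_zero) t ht).differentiableAt (isOpen_Ioi.mem_nhds ht)
  apply strictMonoOn_of_deriv_pos (convex_Ioi 0)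
  · exact (hC.continuousOn.div continuousOn_id (fun x hx => ne_of_gt hx))
  · intro x hx
    rw [interior_Ioi] at hx
    have hx0 : (0:ℝ) < x := hx
    have hd : HasDerivAt (fun t => g t / t) ((deriv g x * x - g x * 1) / x ^ 2) x :=
      ((hdiff x hx).hasDerivAt).div (hasDerivAt_id x) (ne_of_gt hx0)
    rw [hd.deriv]
    have h1 := hder x hx0
    have h2 : g x < deriv g x * x := by
      have := (div_lt_iff₀ hx0).mp h1
      linarith
    have : 0 < deriv g x * x - g x * 1 := by linarith
    positivity

lemma exists_root (g : ℝ → ℝ) (B : ℝ) (hBpos : 0 < B)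
    (hC : ContDiffOn ℝ 1 g (Set.Ioi 0))
    (hder : ∀ t > 0, g t / t < deriv g t)
    (hβ : ∃ β : ℝ, 0 ≤ β ∧ β < B ∧
      Filter.Tendsto (deriv g) (nhdsWithin 0 (Set.Ioi 0)) (nhds β))
    (q c : ℝ) (hq : 1 < q) (hc : 0 < c) (hgr : ∀ t ≥ 1, c * t ^ q ≤ g t) :
    ∃ a₀ : ℝ, 0 < a₀ ∧ g a₀ = B * a₀ := by
  obtain ⟨β, hβ0, hβB, hβlim⟩ := hβ
  have ev : ∀ᶠ t in nhdsWithin 0 (Set.Ioi 0), deriv g t < B :=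
    hβlim.eventually_lt_const hβB
  obtain ⟨t₁, ht₁B, ht₁pos⟩ := (ev.and eventually_mem_nhdsWithin).exists
  have ht₁0 : (0:ℝ) < t₁ := ht₁pos
  have hφ₁ : g t₁ / t₁ < B := lt_trans (hder t₁ ht₁0) ht₁B
  -- large point
  obtain ⟨X, hX⟩ : ∃ x : ℝ, x = (B / c + 1) ^ (1 / (q - 1)) := ⟨_, rfl⟩
  have hXnn : 0 ≤ X := by rw [hX]; positivity
  obtain ⟨t₂, ht₂⟩ : ∃ x : ℝ, x = max (t₁ + 1) (max 1 X) := ⟨_, rfl⟩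
  have ht₂1 : (1:ℝ) ≤ t₂ := by rw [ht₂]; exact le_trans (le_max_left _ _) (le_max_right _ _)
  have ht₂X : X ≤ t₂ := by rw [ht₂]; exact le_trans (le_max_right _ _) (le_max_right _ _)
  have ht₂t₁ : t₁ < t₂ := by
    rw [ht₂]; have := le_max_left (t₁ + 1) (max 1 X); linarith
  have ht₂0 : (0:ℝ) < t₂ := by linarith
  have hq1 : q - 1 ≠ 0 := by intro h; apply absurd hq; simp; nlinarith
  have hXpow : X ^ (q - 1) = B / c + 1 := by
    rw [hX, ← Real.rpow_mul (by positivity)]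
    rw [show 1 / (q - 1) * (q - 1) = 1 from by field_simp]
    exact Real.rpow_one _
  have ht₂pow : B / c + 1 ≤ t₂ ^ (q - 1) := by
    rw [← hXpow]
    exact Real.rpow_le_rpow hXnn ht₂X (by linarith)
  have hφ₂ : B < g t₂ / t₂ := by
    have h1 := hgr t₂ ht₂1
    have h2 : t₂ ^ q = t₂ ^ (q - 1) * t₂ := by
      rw [show q = (q - 1) + 1 from by ring, Real.rpow_add ht₂0, Real.rpow_one]
      ring_nf
    have h3 : c * (t₂ ^ (q - 1) * t₂) ≤ g t₂ := by rw [← h2]; exact h1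
    have h4 : (B / c + 1) * c ≤ t₂ ^ (q - 1) * c :=
      mul_le_mul_of_nonneg_right ht₂pow hc.le
    have h5 : (B / c + 1) * c = B + c := by field_simp
    rw [lt_div_iff₀ ht₂0]
    nlinarith
  -- IVT
  have hsub : Set.Icc t₁ t₂ ⊆ Set.Ioi 0 := fun x hx => lt_of_lt_of_le ht₁0 hx.1
  have hcont : ContinuousOn (fun t => g t / t) (Set.Icc t₁ t₂) :=
    ((hC.continuousOn.div continuousOn_id (fun x hx => ne_of_gt hx)).mono hsub)
  have hmem : B ∈ Set.Icc (g t₁ / t₁) (g t₂ / t₂) := ⟨le_of_lt hφ₁, le_of_lt hφ₂⟩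
  obtain ⟨a₀, ha₀mem, ha₀⟩ := intermediate_value_Icc (le_of_lt ht₂t₁) hcont hmem
  refine ⟨a₀, lt_of_lt_of_le ht₁0 ha₀mem.1, ?_⟩
  have ha₀0 : (0:ℝ) < a₀ := lt_of_lt_of_le ht₁0 ha₀mem.1
  field_simp at ha₀
  linarith [ha₀]

/-- Conditions (G) on the nonlinearity `g`, extended to `[0,∞)` by `g 0 = 0`. -/
def CondG (n : ℕ) (g : ℝ → ℝ) : Prop :=
  ContDiffOn ℝ 1 g (Set.Ioi 0) ∧
  (∀ t > 0, 0 < g t) ∧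
  Filter.Tendsto g (nhdsWithin 0 (Set.Ioi 0)) (nhds 0) ∧
  (∀ t > 0, g t / t < deriv g t ∧ deriv g t ≤ (((n : ℝ) + 4) / ((n : ℝ) - 4)) * (g t / t)) ∧
  (∃ β : ℝ, 0 ≤ β ∧ β < (n : ℝ) ^ 2 * ((n : ℝ) - 4) ^ 2 / 16 ∧
    Filter.Tendsto (deriv g) (nhdsWithin 0 (Set.Ioi 0)) (nhds β)) ∧
  (∃ q c : ℝ, 1 < q ∧ 0 < c ∧ ∀ t ≥ 1, c * t ^ q ≤ g t) ∧
  g 0 = 0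

/-- `v` solves the ODE `v'''' - A v'' + B v = g(v)` on all of `ℝ`. -/
def IsSol (A B : ℝ) (g v : ℝ → ℝ) : Prop :=
  ∀ t : ℝ, iteratedDeriv 4 v t - A * iteratedDeriv 2 v t + B * v t = g (v t)

set_option maxHeartbeats 1000000 in
theorem stmt_1 (n : ℕ) (hn : 5 ≤ n) (g : ℝ → ℝ) (hg : CondG n g)
    (A B : ℝ) (hA : A = ((n : ℝ) * ((n : ℝ) - 4) + 8) / 2)
    (hB : B = (n : ℝ) ^ 2 * ((n : ℝ) - 4) ^ 2 / 16) :
    (∃! a₀ : ℝ, 0 < a₀ ∧ g a₀ = B * a₀) ∧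
    ∀ v : ℝ → ℝ, ContDiff ℝ 4 v → (∀ t, 0 < v t) → IsSol A B g v →
      ∀ a₀ : ℝ, 0 < a₀ → g a₀ = B * a₀ →
        (⨅ t : ℝ, v t) ≤ a₀ ∧ ((⨅ t : ℝ, v t) = a₀ ↔ ∀ t, v t = a₀) := by
  obtain ⟨hC, hgpos, hlim0, hder2, hβ, hgrow, hg0⟩ := hg
  have hn5 : (5:ℝ) ≤ (n:ℝ) := by exact_mod_cast hn
  have hn4 : (1:ℝ) ≤ (n:ℝ) - 4 := by linarith
  have hBpos : 0 < B := by rw [hB]; nlinarith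
  have hApos : 0 < A := by rw [hA]; nlinarith
  have hder : ∀ t > 0, g t / t < deriv g t := fun t ht => (hder2 t ht).1
  have sm : StrictMonoOn (fun t => g t / t) (Set.Ioi 0) := phi_mono g hC hder
  obtain ⟨q, c, hq, hc, hgr⟩ := hgrow
  have hβ' : ∃ β : ℝ, 0 ≤ β ∧ β < B ∧
      Filter.Tendsto (deriv g) (nhdsWithin 0 (Set.Ioi 0)) (nhds β) := by
    obtain ⟨β, h1, h2, h3⟩ := hβ
    exact ⟨β, h1, by rw [hB]; exact h2, h3⟩
  obtain ⟨r₀, hr₀pos, hr₀eq⟩ := exists_root g B hBpos hC hder hβ' q c hq hc hgr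
  -- uniqueness helper
  have uniq : ∀ y z : ℝ, 0 < y → g y = B * y → 0 < z → g z = B * z → y = z := by
    intro y z hy hgy hz hgz
    have h1 : (fun t => g t / t) y = (fun t => g t / t) z := by
      simp only
      rw [hgy, hgz]
      field_simp
    exact sm.injOn hy hz h1
  constructor
  · exact ⟨r₀, ⟨hr₀pos, hr₀eq⟩, fun y hy => uniq y r₀ hy.1 hy.2 hr₀pos hr₀eq⟩
  intro v hv4 hvpos hsol a₀ ha₀pos ha₀eq
  -- B*s ≤ g s for s ≥ a₀
  have P7 : ∀ s, a₀ ≤ s → B * s ≤ g s := by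
    intro s hs
    rcases eq_or_lt_of_le hs with h | h
    · rw [← h, ha₀eq]
    · have hs0 : (0:ℝ) < s := lt_trans ha₀pos h
      have h2 := sm (Set.mem_Ioi.mpr ha₀pos) (Set.mem_Ioi.mpr hs0) h
      simp only at h2
      have h3 : g a₀ / a₀ = B := by rw [ha₀eq]; field_simp
      rw [h3] at h2
      have := (lt_div_iff₀ hs0).mp h2
      linarith
  have Pstrict : ∀ s, a₀ < s → B * s < g s := by
    intro s h
    have hs0 : (0:ℝ) < s := lt_trans ha₀pos h
    have h2 := sm (Set.mem_Ioi.mpr ha₀pos) (Set.mem_Ioi.mpr hs0) h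
    simp only at h2
    have h3 : g a₀ / a₀ = B := by rw [ha₀eq]; field_simp
    rw [h3] at h2
    exact (lt_div_iff₀ hs0).mp h2
  -- derivative chain
  have hd0 : Differentiable ℝ v := hv4.differentiable (by norm_num)
  have hc3 : ContDiff ℝ 3 (deriv v) := (contDiff_succ_iff_deriv.mp (by exact_mod_cast hv4)).2.2
  have hd1 : Differentiable ℝ (deriv v) := hc3.differentiable (by norm_num)
  have hc2 : ContDiff ℝ 2 (deriv (deriv v)) := (contDiff_succ_iff_deriv.mp (by exact_mod_cast hc3)).2.2
  have hd2 : Differentiable ℝ (deriv (deriv v)) := hc2.differentiable (by norm_num)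
  have hc1 : ContDiff ℝ 1 (deriv (deriv (deriv v))) :=
    (contDiff_succ_iff_deriv.mp (by exact_mod_cast hc2)).2.2
  have hd3 : Differentiable ℝ (deriv (deriv (deriv v))) := hc1.differentiable (by norm_num)
  obtain ⟨v1, hv1⟩ : ∃ w, w = deriv v := ⟨_, rfl⟩
  obtain ⟨v2, hv2⟩ : ∃ w, w = deriv (deriv v) := ⟨_, rfl⟩
  obtain ⟨v3, hv3⟩ : ∃ w, w = deriv (deriv (deriv v)) := ⟨_, rfl⟩
  obtain ⟨v4, hv4'⟩ : ∃ w, w = deriv (deriv (deriv (deriv v))) := ⟨_, rfl⟩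
  have hD0 : ∀ t, HasDerivAt v (v1 t) t := fun t => by rw [hv1]; exact (hd0 t).hasDerivAt
  have hD1 : ∀ t, HasDerivAt v1 (v2 t) t := fun t => by
    rw [hv1, hv2]; exact (hd1 t).hasDerivAt
  have hD2 : ∀ t, HasDerivAt v2 (v3 t) t := fun t => by
    rw [hv2, hv3]; exact (hd2 t).hasDerivAt
  have hD3 : ∀ t, HasDerivAt v3 (v4 t) t := fun t => by
    rw [hv3, hv4']; exact (hd3 t).hasDerivAt
  have hode : ∀ t, v4 t = A * v2 t - B * v t + g (v t) := by
    intro t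
    have h1 := hsol t
    have h2 : iteratedDeriv 2 v = deriv (deriv v) := by
      simp [iteratedDeriv_succ, iteratedDeriv_zero]
    have h4 : iteratedDeriv 4 v = deriv (deriv (deriv (deriv v))) := by
      simp [iteratedDeriv_succ, iteratedDeriv_zero]
    rw [h2, h4, ← hv4', ← hv2] at h1
    linarith
  -- bddBelow
  have hbdd : BddBelow (Set.range v) := ⟨0, fun y ⟨t, ht⟩ => ht ▸ (hvpos t).le⟩
  -- the key constancy lemma
  have key : a₀ ≤ (⨅ t, v t) → ∀ t, v t = v 0 := by
    intro hma
    have hBv : ∀ t, B * v t ≤ g (v t) := fun t =>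
      P7 _ (le_trans hma (ciInf_le hbdd t))
    have hAv : ∀ t, A * v2 t ≤ v4 t := fun t => by
      have h1 := hode t
      have h2 := hBv t
      linarith
    by_cases hneg : ∀ t, v2 t ≤ 0
    · -- v is concave and bounded below, hence v1 ≡ 0
      have hv1mono : ∀ ⦃s t : ℝ⦄, s ≤ t → v1 t ≤ v1 s := by
        intro s t hst
        have := mono_Ici (fun r => -(v1 r)) (fun r => -(v2 r))
          (fun r => (hD1 r).neg) s (fun r _ => by show (0:ℝ) ≤ -(v2 r); linarith [hneg r]) le_rfl hst
        linarith
      have hv1zero : ∀ t, v1 t = 0 := by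
        intro τ
        by_contra hne
        rcases lt_or_gt_of_ne hne with hlt | hgt
        · -- v1 τ < 0 : v decreases linearly forward
          have hup : ∀ t, τ ≤ t → -v τ + (-(v1 τ)) * (t - τ) ≤ -v t := by
            apply lin_lower (fun r => -(v r)) (fun r => -(v1 r)) (fun r => (hD0 r).neg)
            intro t ht
            have := hv1mono ht
            linarith
          obtain ⟨tt, htt⟩ : ∃ x : ℝ, x = τ + (v τ) / (-(v1 τ)) + 1 := ⟨_, rfl⟩
          have hvτ := hvpos τ
          have hnum : 0 < -(v1 τ) := by linarith
          have httτ : τ ≤ tt := by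
            rw [htt]
            have : 0 ≤ v τ / (-(v1 τ)) := by positivity
            linarith
          have h5 := hup tt httτ
          have h6 : (-(v1 τ)) * (tt - τ) = v τ + (-(v1 τ)) := by
            rw [htt]
            field_simp
            ring
          have := hvpos tt
          nlinarith
        · -- v1 τ > 0 : v decreases linearly backward; use reflection
          have hup : ∀ t, -τ ≤ t → -(v (-(-τ))) + (v1 τ) * (t - (-τ)) ≤ -(v (-t)) := by
            have href : ∀ t : ℝ, HasDerivAt (fun r => -(v (-r))) (v1 (-t)) t := by
              intro t
              have h1 := (hD0 (-t)).comp t (hasDerivAt_neg t)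
              exact (h1.neg).congr_deriv (by ring)
            have := lin_lower (fun r => -(v (-r))) (fun r => v1 (-r)) href (-τ) (v1 τ)
              (fun t ht => by
                have : v1 (-t) ≥ v1 τ := hv1mono (by linarith)
                linarith)
            intro t ht
            exact this t ht
          obtain ⟨tt, htt⟩ : ∃ x : ℝ, x = -τ + (v τ) / (v1 τ) + 1 := ⟨_, rfl⟩
          have hvτ := hvpos τ
          have httτ : -τ ≤ tt := by
            rw [htt]
            have : 0 ≤ v τ / (v1 τ) := by positivity
            linarith
          have h5 := hup tt httτ
          simp only [neg_neg] at h5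
          have h6 : (v1 τ) * (tt - (-τ)) = v τ + v1 τ := by
            rw [htt]
            field_simp
            ring
          have := hvpos (-tt)
          nlinarith
      have : ∀ x, deriv v x = 0 := fun x => by rw [← hv1]; exact hv1zero x
      exact fun t => is_const_of_deriv_eq_zero hd0 this t 0
    · -- blow-up case : contradiction
      exfalso
      push_neg at hneg
      obtain ⟨t₀, ht₀⟩ := hneg
      obtain ⟨α, hαdef⟩ : ∃ x : ℝ, x = Real.sqrt A := ⟨_, rfl⟩
      have hα : 0 < α := by rw [hαdef]; exact Real.sqrt_pos.mpr hApos
      have hα2 : α ^ 2 = A := by rw [hαdef]; exact Real.sq_sqrt hApos.le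
      have hineq : ∀ t, α ^ 2 * v2 t ≤ v4 t := fun t => by rw [hα2]; exact hAv t
      -- growth constant setup
      obtain ⟨X, hX⟩ : ∃ x : ℝ, x = (2 * B / c + 1) ^ (1 / (q - 1)) := ⟨_, rfl⟩
      have hXnn : 0 ≤ X := by rw [hX]; positivity
      obtain ⟨R, hRdef⟩ : ∃ x : ℝ, x = max 1 X := ⟨_, rfl⟩
      have hR1 : 1 ≤ R := by rw [hRdef]; exact le_max_left _ _
      have hRX : X ≤ R := by rw [hRdef]; exact le_max_right _ _
      have hq1 : q - 1 ≠ 0 := by intro h; nlinarith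
      have hXpow : X ^ (q - 1) = 2 * B / c + 1 := by
        rw [hX, ← Real.rpow_mul (by positivity)]
        rw [show 1 / (q - 1) * (q - 1) = 1 from by field_simp]
        exact Real.rpow_one _
      have hode' : ∀ t, R ≤ v t → 0 ≤ v2 t → c / 2 * v t ^ q ≤ v4 t := by
        intro t hvR hv2nn
        have hv1le : (1:ℝ) ≤ v t := le_trans hR1 hvR
        have hvt0 : (0:ℝ) < v t := by linarith
        have hgq := hgr (v t) hv1le
        have hAv2 : 0 ≤ A * v2 t := mul_nonneg hApos.le hv2nn
        have hpow : 2 * B / c + 1 ≤ v t ^ (q - 1) := by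
          rw [← hXpow]
          exact Real.rpow_le_rpow hXnn (le_trans hRX hvR) (by linarith)
        have hsplit : v t ^ q = v t ^ (q - 1) * v t := by
          rw [show q = (q - 1) + 1 from by ring, Real.rpow_add hvt0, Real.rpow_one]
          ring_nf
        have hbig : B * v t ≤ c / 2 * v t ^ q := by
          rw [hsplit]
          have h1 : (2 * B / c + 1) * v t ≤ v t ^ (q - 1) * v t :=
            mul_le_mul_of_nonneg_right hpow hvt0.le
          have h2 : c / 2 * ((2 * B / c + 1) * v t) = B * v t + c / 2 * v t := by
            field_simp
          nlinarith
        have h3 := hode t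
        nlinarith
      by_cases hu : 0 < v3 t₀ + α * v2 t₀
      · have hlin := gron v2 v3 v4 hD2 hD3 α hα hineq t₀ ht₀ hu
        exact blowup v v1 v2 v3 v4 hD0 hD1 hD2 hD3 hvpos (c / 2) q R (by positivity) hq hR1
          hode' ((v3 t₀ + α * v2 t₀) / 2) t₀ (half_pos hu) hlin
      · -- reflection
        push_neg at hu
        have hW0 : ∀ t, HasDerivAt (fun r => v (-r)) (-(v1 (-t))) t := fun t =>
          ((hD0 (-t)).comp t (hasDerivAt_neg t)).congr_deriv (by ring)
        have hW1 : ∀ t, HasDerivAt (fun r => -(v1 (-r))) (v2 (-t)) t := fun t =>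
          (((hD1 (-t)).comp t (hasDerivAt_neg t)).neg).congr_deriv (by ring)
        have hW2 : ∀ t, HasDerivAt (fun r => v2 (-r)) (-(v3 (-t))) t := fun t =>
          ((hD2 (-t)).comp t (hasDerivAt_neg t)).congr_deriv (by ring)
        have hW3 : ∀ t, HasDerivAt (fun r => -(v3 (-r))) (v4 (-t)) t := fun t =>
          (((hD3 (-t)).comp t (hasDerivAt_neg t)).neg).congr_deriv (by ring)
        have hineq' : ∀ t, α ^ 2 * v2 (-t) ≤ v4 (-t) := fun t => hineq (-t)
        have hu' : 0 < -(v3 (-(-t₀))) + α * v2 (-(-t₀)) := by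
          simp only [neg_neg]
          nlinarith
        have h2' : 0 < v2 (-(-t₀)) := by simp only [neg_neg]; exact ht₀
        have hlin := gron (fun r => v2 (-r)) (fun r => -(v3 (-r))) (fun r => v4 (-r))
          hW2 hW3 α hα (fun t => hineq' t) (-t₀) h2' hu'
        exact blowup (fun r => v (-r)) (fun r => -(v1 (-r))) (fun r => v2 (-r))
          (fun r => -(v3 (-r))) (fun r => v4 (-r)) hW0 hW1 hW2 hW3 (fun t => hvpos (-t))
          (c / 2) q R (by positivity) hq hR1
          (fun t h1 h2 => hode' (-t) h1 h2) _ (-t₀)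
          (half_pos hu') hlin
  -- conclude
  have hconst_inf : (∀ t, v t = v 0) → (⨅ t, v t) = v 0 := by
    intro hcv
    have : v = fun _ => v 0 := funext hcv
    rw [this]
    exact ciInf_const
  constructor
  · -- inf ≤ a₀
    by_contra hlt
    push_neg at hlt
    have hcv := key hlt.le
    have hCeq := hconst_inf hcv
    -- v is the constant v 0, so all derivatives vanish and g (v 0) = B * v 0
    have hv1z : ∀ t, v1 t = 0 := by
      intro t
      rw [hv1, funext hcv, deriv_const]
    have hv2z : ∀ t, v2 t = 0 := by
      intro t
      rw [hv2, show deriv v = fun _ => (0:ℝ) from funext (fun s => by rw [← hv1]; exact hv1z s),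
        deriv_const]
    have hv3z : ∀ t, v3 t = 0 := by
      intro t
      rw [hv3, show deriv (deriv v) = fun _ => (0:ℝ) from
        funext (fun s => by rw [← hv2]; exact hv2z s), deriv_const]
    have hv4z : ∀ t, v4 t = 0 := by
      intro t
      rw [hv4', show deriv (deriv (deriv v)) = fun _ => (0:ℝ) from
        funext (fun s => by rw [← hv3]; exact hv3z s), deriv_const]
    have h1 := hode 0
    rw [hv2z 0, hv4z 0] at h1
    have h2 : g (v 0) = B * v 0 := by linarith
    have h3 : a₀ < v 0 := by rw [← hCeq]; exact hlt
    have := Pstrict (v 0) h3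
    linarith
  · constructor
    · intro heq
      have hcv := key (le_of_eq heq.symm)
      have hCeq := hconst_inf hcv
      intro t
      rw [hcv t, ← hCeq, heq]
    · intro hcv
      have : v = fun _ => a₀ := funext hcv
      rw [this]
      exact ciInf_const
end
end

section
/- Let v : ℝ → ℝ be a C⁴ positive solution of the ODE v''''(t) − A·v''(t) + B·v(t) = g(v(t)) with v(t) → 0 as |t| → ∞. Then for every ε > 0 there exists a constant C_ε < ∞ such that v(t) ≤ C_ε·e^{−(√μ − ε)·|t|} for all t ∈ ℝ, where μ = (A − √(A² − 4(B − β)))/2 and β = lim_{t→0⁺} g'(t). -/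
open Real Filter Set

noncomputable section

/-- continuous function tending to 0 at both ends is bounded above -/
lemma bdd_of_tendsto_zero {f : ℝ → ℝ} (hc : Continuous f)
    (hT : Filter.Tendsto f Filter.atTop (nhds 0)) (hB : Filter.Tendsto f Filter.atBot (nhds 0)) :
    ∃ M : ℝ, ∀ t, f t ≤ M := by
  have h1 : ∀ᶠ t in Filter.atTop, f t ≤ 1 := hT.eventually (eventually_le_nhds one_pos)
  have h2 : ∀ᶠ t in Filter.atBot, f t ≤ 1 := hB.eventually (eventually_le_nhds one_pos)
  obtain ⟨hi, hhi⟩ := Filter.eventually_atTop.1 h1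
  obtain ⟨lo, hlo⟩ := Filter.eventually_atBot.1 h2
  obtain ⟨C, hC⟩ := (isCompact_Icc (a := lo) (b := hi)).exists_bound_of_continuousOn
    hc.continuousOn
  refine ⟨max C 1, fun t => ?_⟩
  rcases le_or_gt t lo with h | h
  · exact (hlo t h).trans (le_max_right _ _)
  rcases le_or_gt hi t with h' | h'
  · exact (hhi t h').trans (le_max_right _ _)
  · have := hC t ⟨h.le, h'.le⟩
    have : f t ≤ C := (le_abs_self _).trans (by simpa using this)
    exact this.trans (le_max_left _ _)

lemma hasDerivAt_comp_neg {u : ℝ → ℝ} {d t : ℝ} (h : HasDerivAt u d (-t)) :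
    HasDerivAt (fun s => u (-s)) (-d) t := by
  exact (HasDerivAt.comp t h (hasDerivAt_neg t)).congr_deriv (by ring)

/-- Taylor-type upper bound from a bound on the second derivative on a ray. -/
lemma taylor_ub {f f' f'' : ℝ → ℝ} {a m : ℝ}
    (h1 : ∀ t, HasDerivAt f (f' t) t) (h2 : ∀ t, HasDerivAt f' (f'' t) t)
    (hm : ∀ t ≥ a, f'' t ≤ m) :
    ∀ t ≥ a, f t ≤ f a + f' a * (t - a) + m * (t - a) ^ 2 / 2 := by
  set G : ℝ → ℝ := fun t => f a + f' a * (t - a) + m * (t - a) ^ 2 / 2 - f t with hG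
  set G' : ℝ → ℝ := fun t => f' a + m * (t - a) - f' t with hG'
  have hdG : ∀ t, HasDerivAt G (G' t) t := by
    intro t
    have : HasDerivAt (fun t => f a + f' a * (t - a) + m * (t - a) ^ 2 / 2) (f' a + m * (t-a)) t := by
      have hid : HasDerivAt (fun t : ℝ => t - a) 1 t := (hasDerivAt_id t).sub_const a
      have h3 : HasDerivAt (fun t : ℝ => m * (t - a) ^ 2 / 2) (m * (t - a)) t := by
        have : HasDerivAt (fun t : ℝ => m * (t - a) ^ 2 / 2) _ t := ((hid.pow 2).const_mul m).div_const 2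
        convert this using 1
        ring
      have h4 : HasDerivAt (fun t : ℝ => f a + f' a * (t - a)) (f' a) t := by
        simpa using (hid.const_mul (f' a)).const_add (f a)
      exact h4.add h3
    exact this.sub (h1 t)
  have hdG' : ∀ t, HasDerivAt G' (m - f'' t) t := by
    intro t
    have : HasDerivAt (fun t => f' a + m * (t - a)) m t := by
      simpa using (((hasDerivAt_id t).sub_const a).const_mul m).const_add (f' a)
    exact this.sub (h2 t)
  have hG'mono : MonotoneOn G' (Ici a) := by
    apply monotoneOn_of_deriv_nonneg (convex_Ici a)
      (fun t ht => ((hdG' t).continuousAt).continuousWithinAt)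
      (fun t ht => ((hdG' t).differentiableAt).differentiableWithinAt)
    intro t ht
    rw [interior_Ici] at ht
    rw [(hdG' t).deriv]
    have := hm t (le_of_lt ht)
    linarith
  have hG'0 : ∀ t ≥ a, 0 ≤ G' t := by
    intro t ht
    have : G' a ≤ G' t := hG'mono self_mem_Ici ht ht
    have ha' : G' a = 0 := by simp [hG']
    linarith
  have hGmono : MonotoneOn G (Ici a) := by
    apply monotoneOn_of_deriv_nonneg (convex_Ici a)
      (fun t ht => ((hdG t).continuousAt).continuousWithinAt)
      (fun t ht => ((hdG t).differentiableAt).differentiableWithinAt)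
    intro t ht
    rw [interior_Ici] at ht
    rw [(hdG t).deriv]
    exact hG'0 t (le_of_lt ht)
  intro t ht
  have : G a ≤ G t := hGmono self_mem_Ici ht ht
  have ha' : G a = 0 := by simp [hG]
  simp only [hG] at this ha' ⊢
  linarith

/-- Maximum-principle barrier: a subsolution of `φ'' = κ² φ` on a ray, bounded above,
decays exponentially. -/
lemma barrier {φ φ' φ'' : ℝ → ℝ} {T κ M : ℝ} (hκ : 0 < κ)
    (h1 : ∀ t, HasDerivAt φ (φ' t) t) (h2 : ∀ t, HasDerivAt φ' (φ'' t) t)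
    (hineq : ∀ t ≥ T, κ ^ 2 * φ t ≤ φ'' t) (hbd : ∀ t ≥ T, φ t ≤ M) :
    ∀ t ≥ T, φ t ≤ max (φ T) 0 * Real.exp (-κ * (t - T)) := by
  intro t₁ ht₁
  set a := max (φ T) 0 with ha
  have ha0 : 0 ≤ a := le_max_right _ _
  have haT : φ T ≤ a := le_max_left _ _
  set E1 : ℝ → ℝ := fun t => Real.exp (-κ * (t - T)) with hE1def
  set E2 : ℝ → ℝ := fun t => Real.exp (κ * (t - T)) with hE2def
  have hE1 : ∀ t, HasDerivAt E1 (-κ * E1 t) t := by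
    intro t
    have hl : HasDerivAt (fun t : ℝ => -κ * (t - T)) (-κ) t := by
      simpa using ((hasDerivAt_id t).sub_const T).const_mul (-κ)
    simpa [hE1def, mul_comm] using hl.exp
  have hE2 : ∀ t, HasDerivAt E2 (κ * E2 t) t := by
    intro t
    have hl : HasDerivAt (fun t : ℝ => κ * (t - T)) κ t := by
      simpa using ((hasDerivAt_id t).sub_const T).const_mul κ
    simpa [hE2def, mul_comm] using hl.exp
  have hE1pos : ∀ t, 0 < E1 t := fun t => Real.exp_pos _
  have hE2pos : ∀ t, 0 < E2 t := fun t => Real.exp_pos _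
  have key : ∀ η > 0, φ t₁ ≤ a * E1 t₁ + η * E2 t₁ := by
    intro η hη
    set h : ℝ → ℝ := fun t => φ t - (a * E1 t + η * E2 t) with hhdef
    set h' : ℝ → ℝ := fun t => φ' t - (a * (-κ * E1 t) + η * (κ * E2 t)) with hh'def
    set h'' : ℝ → ℝ := fun t => φ'' t - (a * (κ ^ 2 * E1 t) + η * (κ ^ 2 * E2 t)) with hh''def
    have hd1 : ∀ t, HasDerivAt h (h' t) t := fun t =>
      (h1 t).sub (((hE1 t).const_mul a).add ((hE2 t).const_mul η))
    have hd2 : ∀ t, HasDerivAt h' (h'' t) t := by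
      intro t
      have e1 : HasDerivAt (fun t => -κ * E1 t) (-κ * (-κ * E1 t)) t := (hE1 t).const_mul (-κ)
      have e2 : HasDerivAt (fun t => κ * E2 t) (κ * (κ * E2 t)) t := (hE2 t).const_mul κ
      have : HasDerivAt h' _ t := (h2 t).sub ((e1.const_mul a).add (e2.const_mul η))
      convert this using 1
      simp only [hh''def]
      ring
    have hcont : Continuous h := by
      have : ∀ t, DifferentiableAt ℝ h t := fun t => (hd1 t).differentiableAt
      exact Differentiable.continuous this
    have hhineq : ∀ t ≥ T, κ ^ 2 * h t ≤ h'' t := by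
      intro t ht
      have := hineq t ht
      simp only [hhdef, hh''def]
      ring_nf
      nlinarith [hE1pos t, hE2pos t]
    have hhT : h T < 0 := by
      have : E1 T = 1 := by simp [hE1def]
      have h2' : E2 T = 1 := by simp [hE2def]
      simp only [hhdef, this, h2']
      nlinarith
    -- choose R far to the right where h < 0
    set M' := max M 0 with hM'
    set R := max t₁ (T + Real.log ((M' + 1) / η) / κ) with hR
    have hRT : R ≥ T := le_trans ht₁ (le_max_left _ _)
    have hRt₁ : t₁ ≤ R := le_max_left _ _
    have hhR : h R < 0 := by
      have hRlog : T + Real.log ((M' + 1) / η) / κ ≤ R := le_max_right _ _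
      have hexp : (M' + 1) / η ≤ E2 R := by
        have h1' : Real.log ((M' + 1) / η) ≤ κ * (R - T) := by
          have : Real.log ((M' + 1) / η) / κ ≤ R - T := by linarith
          calc Real.log ((M' + 1) / η) = κ * (Real.log ((M' + 1) / η) / κ) := by
                field_simp
            _ ≤ κ * (R - T) := by
                apply mul_le_mul_of_nonneg_left this hκ.le
        have hpos : (0:ℝ) < (M' + 1) / η := by
          apply div_pos _ hη
          have : (0:ℝ) ≤ M' := le_max_right _ _
          linarith
        calc (M' + 1) / η = Real.exp (Real.log ((M' + 1) / η)) := (Real.exp_log hpos).symm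
          _ ≤ E2 R := Real.exp_le_exp.2 h1'
      have hE2R : M' + 1 ≤ η * E2 R := by
        rw [div_le_iff₀ hη] at hexp
        linarith [hexp]
      have hφR : φ R ≤ M := hbd R hRT
      have hMM' : M ≤ M' := le_max_left _ _
      have : a * E1 R ≥ 0 := mul_nonneg ha0 (hE1pos R).le
      simp only [hhdef]
      nlinarith
    -- maximize h on [T, R]
    obtain ⟨t', ht'mem, ht'max⟩ := (isCompact_Icc (a := T) (b := R)).exists_isMaxOn
      (Set.nonempty_Icc.2 hRT) hcont.continuousOn
    have hmax := ht'max
    have ht₁mem : t₁ ∈ Icc T R := ⟨ht₁, hRt₁⟩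
    have hfin : h t' ≤ 0 := by
      by_contra hpos
      push_neg at hpos
      -- convexity component argument
      set S1 := {s ∈ Icc T t' | h s ≤ 0} with hS1
      have hS1ne : S1.Nonempty := ⟨T, ⟨le_refl T, ht'mem.1⟩, hhT.le⟩
      have hS1bdd : BddAbove S1 := BddAbove.mono (fun s hs => hs.1) bddAbove_Icc
      have hS1closed : IsClosed S1 :=
        IsClosed.inter isClosed_Icc (isClosed_le hcont continuous_const)
      set α := sSup S1 with hα
      have hαmem : α ∈ S1 := hS1closed.csSup_mem hS1ne hS1bdd
      have hαle : α ≤ t' := hαmem.1.2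
      have hαT : T ≤ α := hαmem.1.1
      have hαh : h α ≤ 0 := hαmem.2
      have hαlt : α < t' := by
        rcases lt_or_eq_of_le hαle with hlt | heq
        · exact hlt
        · exfalso; rw [heq] at hαh; exact absurd hαh (not_le.2 hpos)
      have hpos1 : ∀ s, α < s → s ≤ t' → 0 < h s := by
        intro s hs1 hs2
        by_contra hns
        push_neg at hns
        have : s ∈ S1 := ⟨⟨hαT.trans hs1.le, hs2⟩, hns⟩
        exact absurd (le_csSup hS1bdd this) (not_le.2 hs1)
      set S2 := {s ∈ Icc t' R | h s ≤ 0} with hS2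
      have hS2ne : S2.Nonempty := ⟨R, ⟨ht'mem.2, le_refl R⟩, hhR.le⟩
      have hS2bdd : BddBelow S2 := BddBelow.mono (fun s hs => hs.1) bddBelow_Icc
      have hS2closed : IsClosed S2 :=
        IsClosed.inter isClosed_Icc (isClosed_le hcont continuous_const)
      set b := sInf S2 with hb
      have hbmem : b ∈ S2 := hS2closed.csInf_mem hS2ne hS2bdd
      have hble : t' ≤ b := hbmem.1.1
      have hbR : b ≤ R := hbmem.1.2
      have hbh : h b ≤ 0 := hbmem.2
      have hblt : t' < b := by
        rcases lt_or_eq_of_le hble with hlt | heq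
        · exact hlt
        · exfalso; rw [← heq] at hbh; exact absurd hbh (not_le.2 hpos)
      have hpos2 : ∀ s, t' ≤ s → s < b → 0 < h s := by
        intro s hs1 hs2
        by_contra hns
        push_neg at hns
        have : s ∈ S2 := ⟨⟨hs1, hs2.le.trans hbR⟩, hns⟩
        exact absurd (csInf_le hS2bdd this) (not_le.2 hs2)
      -- h is convex on [α, b]
      have hderiv_h : deriv h = h' := funext fun t => (hd1 t).deriv
      have hconv : ConvexOn ℝ (Icc α b) h := by
        apply convexOn_of_deriv2_nonneg (convex_Icc α b) hcont.continuousOn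
          (fun x _ => (hd1 x).differentiableAt.differentiableWithinAt)
          (by rw [hderiv_h]; exact fun x _ => (hd2 x).differentiableAt.differentiableWithinAt)
        intro x hx
        rw [interior_Icc] at hx
        have hx1 : α < x := hx.1
        have hx2 : x < b := hx.2
        have hhx : 0 < h x := by
          rcases le_or_gt x t' with hc | hc
          · exact hpos1 x hx1 hc
          · exact hpos2 x hc.le hx2
        have hxT : T ≤ x := hαT.trans hx1.le
        have := hhineq x hxT
        show 0 ≤ deriv^[2] h x
        have : deriv^[2] h x = h'' x := by
          rw [Function.iterate_succ, Function.iterate_one, Function.comp_apply]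
          rw [hderiv_h]
          exact (hd2 x).deriv
        rw [this]
        nlinarith [hhineq x hxT, sq_nonneg κ, hhx, mul_pos (pow_pos hκ 2) hhx]
      have hseg : t' ∈ segment ℝ α b := by
        rw [segment_eq_Icc (hαle.trans hble)]
        exact ⟨hαle, hble⟩
      have := hconv.le_on_segment (left_mem_Icc.2 (hαle.trans hble))
        (right_mem_Icc.2 (hαle.trans hble)) hseg
      have : h t' ≤ max (h α) (h b) := this
      have hmax0 : max (h α) (h b) ≤ 0 := max_le hαh hbh
      linarith
    have := hmax ht₁mem
    have hht₁ : h t₁ ≤ h t' := this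
    simp only [hhdef] at hht₁ hfin
    linarith
  -- let η → 0
  have := le_of_forall_pos_le_add (a := φ t₁) (b := a * E1 t₁) ?_
  · exact this
  intro ε hε
  have hη : 0 < ε / E2 t₁ := div_pos hε (hE2pos t₁)
  have := key _ hη
  have hcancel : ε / E2 t₁ * E2 t₁ = ε := div_mul_cancel₀ ε (ne_of_gt (hE2pos t₁))
  linarith [this, hcancel.le]

lemma stay_neg {u u' u'' : ℝ → ℝ} {lam Mg K t₀ : ℝ} (hlam : 0 < lam)
    (h1 : ∀ t, HasDerivAt u (u' t) t) (h2 : ∀ t, HasDerivAt u' (u'' t) t)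
    (hcont : Continuous u'') (hquad : ∀ t, u'' t ≤ lam * u t + Mg)
    (hK : Mg + 1 ≤ lam * K)
    (h0 : u t₀ ≤ -K) (h0' : u' t₀ ≤ 0) :
    ∀ t ≥ t₀, u t ≤ -K ∧ u' t ≤ 0 := by
  by_contra hbad
  push_neg at hbad
  obtain ⟨tb, htb, himp⟩ := hbad
  set S := {t : ℝ | t₀ ≤ t ∧ (-K < u t ∨ 0 < u' t)} with hSdef
  have hSne : S.Nonempty := by
    refine ⟨tb, htb, ?_⟩
    rcases le_or_gt (u tb) (-K) with h | h
    · exact Or.inr (himp h)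
    · exact Or.inl h
  have hSbdd : BddBelow S := ⟨t₀, fun s hs => hs.1⟩
  set T := sInf S with hTdef
  have hTt₀ : t₀ ≤ T := le_csInf hSne (fun s hs => hs.1)
  have hgood : ∀ s, t₀ ≤ s → s < T → u s ≤ -K ∧ u' s ≤ 0 := by
    intro s hs1 hs2
    by_contra hn
    rcases not_and_or.1 hn with h | h
    · exact absurd (csInf_le hSbdd ⟨hs1, Or.inl (not_le.1 h)⟩) (not_le.2 hs2)
    · exact absurd (csInf_le hSbdd ⟨hs1, Or.inr (not_le.1 h)⟩) (not_le.2 hs2)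
  have hUT : u T ≤ -K ∧ u' T ≤ 0 := by
    rcases eq_or_lt_of_le hTt₀ with heq | hlt
    · rw [← heq]; exact ⟨h0, h0'⟩
    · have hmem : Ioo t₀ T ∈ nhdsWithin T (Iio T) :=
        Ioo_mem_nhdsLT_of_mem ⟨hlt, le_refl T⟩
      constructor
      · apply le_of_tendsto (((h1 T).continuousAt).continuousWithinAt :
          Filter.Tendsto u (nhdsWithin T (Iio T)) (nhds (u T)))
        filter_upwards [hmem] with s hs
        exact (hgood s hs.1.le hs.2).1
      · apply le_of_tendsto (((h2 T).continuousAt).continuousWithinAt :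
          Filter.Tendsto u' (nhdsWithin T (Iio T)) (nhds (u' T)))
        filter_upwards [hmem] with s hs
        exact (hgood s hs.1.le hs.2).2
  have hu''T : u'' T < 0 := by
    have h1' : lam * u T ≤ lam * (-K) := mul_le_mul_of_nonneg_left hUT.1 hlam.le
    have := hquad T
    nlinarith
  -- find δ > 0 with u'' < 0 on [T, T+δ]
  have hnhds : u'' ⁻¹' (Iio 0) ∈ nhds T :=
    hcont.continuousAt.preimage_mem_nhds (Iio_mem_nhds hu''T)
  obtain ⟨ε, hε, hball⟩ := Metric.mem_nhds_iff.1 hnhds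
  set δ := ε / 2 with hδdef
  have hδ : 0 < δ := by positivity
  have hIccneg : ∀ s ∈ Icc T (T + δ), u'' s < 0 := by
    intro s hs
    apply hball
    rw [Metric.mem_ball, Real.dist_eq, abs_lt]
    constructor <;> [linarith [hs.1]; linarith [hs.2]]
  have hu'anti : StrictAntiOn u' (Icc T (T + δ)) := by
    apply strictAntiOn_of_deriv_neg (convex_Icc _ _)
      (fun s _ => ((h2 s).continuousAt).continuousWithinAt)
    intro s hs
    rw [interior_Icc] at hs
    rw [(h2 s).deriv]
    exact hIccneg s ⟨hs.1.le, hs.2.le⟩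
  have hu'le : ∀ s ∈ Icc T (T + δ), u' s ≤ 0 := by
    intro s hs
    rcases eq_or_lt_of_le hs.1 with heq | hlt
    · rw [← heq]; exact hUT.2
    · have := hu'anti (left_mem_Icc.2 (by linarith)) hs hlt
      linarith [hUT.2]
  have huanti : AntitoneOn u (Icc T (T + δ)) := by
    apply antitoneOn_of_deriv_nonpos (convex_Icc _ _)
      (fun s _ => ((h1 s).continuousAt).continuousWithinAt)
      (fun s _ => ((h1 s).differentiableAt).differentiableWithinAt)
    intro s hs
    rw [interior_Icc] at hs
    rw [(h1 s).deriv]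
    exact hu'le s ⟨hs.1.le, hs.2.le⟩
  have hule : ∀ s ∈ Icc T (T + δ), u s ≤ -K := by
    intro s hs
    have := huanti (left_mem_Icc.2 (by linarith)) hs hs.1
    linarith [hUT.1]
  obtain ⟨s, hsS, hslt⟩ := exists_lt_of_csInf_lt hSne (show sInf S < T + δ by
    rw [← hTdef]; linarith)
  rcases lt_or_ge s T with h | h
  · obtain ⟨hg1, hg2⟩ := hgood s hsS.1 h
    rcases hsS.2 with hb | hb
    · linarith
    · linarith
  · have hsIcc : s ∈ Icc T (T + δ) := ⟨h, hslt.le⟩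
    rcases hsS.2 with hb | hb
    · linarith [hule s hsIcc]
    · linarith [hu'le s hsIcc]

/-- A positive function with `v'' ≤ -1` on a ray cannot exist. -/
lemma blowdown {v v1 v2 : ℝ → ℝ} {M0 t₀ : ℝ}
    (hd1 : ∀ t, HasDerivAt v (v1 t) t) (hd2 : ∀ t, HasDerivAt v1 (v2 t) t)
    (hpos : ∀ t, 0 < v t) (hM : ∀ t, v t ≤ M0)
    (hneg : ∀ t ≥ t₀, v2 t ≤ -1) : False := by
  have htay := taylor_ub hd1 hd2 hneg
  set s := 2 * (|v1 t₀| + M0 + 1) with hs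
  have hM0pos : 0 < M0 := lt_of_lt_of_le (hpos t₀) (hM t₀)
  have hs2 : 2 ≤ s := by
    have := abs_nonneg (v1 t₀)
    nlinarith
  have := htay (t₀ + s) (by linarith)
  have hb : v (t₀ + s) ≤ M0 + v1 t₀ * s - s ^ 2 / 2 := by
    have := hM t₀
    simp only [add_sub_cancel_left] at *
    nlinarith
  have hv1 : v1 t₀ * s ≤ |v1 t₀| * s := by
    apply mul_le_mul_of_nonneg_right (le_abs_self _) (by linarith)
  have hsq : s ^ 2 / 2 = s * (|v1 t₀| + M0 + 1) := by rw [hs]; ring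
  have : v (t₀ + s) ≤ M0 - s * (M0 + 1) := by nlinarith
  have : v (t₀ + s) < 0 := by nlinarith
  exact absurd this (not_lt.2 (hpos _).le)

/-- Main right-tail decay lemma. -/
lemma tail_decay {v v1 v2 v3 : ℝ → ℝ} {h : ℝ → ℝ} {A Bb bb lam1 lam2 M0 Mg T : ℝ}
    (hd1 : ∀ t, HasDerivAt v (v1 t) t) (hd2 : ∀ t, HasDerivAt v1 (v2 t) t)
    (hd3 : ∀ t, HasDerivAt v2 (v3 t) t)
    (hd4 : ∀ t, HasDerivAt v3 (A * v2 t - Bb * v t + h t) t)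
    (hconth : Continuous h)
    (hl2 : 0 < lam2) (hl12 : lam2 < lam1) (hsum : lam1 + lam2 = A)
    (hprod : lam1 * lam2 = Bb - bb) (hbb : 0 ≤ bb)
    (hv0 : ∀ t, 0 < v t) (hvM : ∀ t, v t ≤ M0)
    (hh0 : ∀ t, 0 < h t) (hhM : ∀ t, h t ≤ Mg)
    (htail : ∀ t ≥ T, h t ≤ bb * v t) :
    ∃ C : ℝ, ∀ t ≥ 0, v t ≤ C * Real.exp (-Real.sqrt lam2 * t) := by
  have hl1 : 0 < lam1 := hl2.trans hl12
  have hM0 : 0 < M0 := lt_of_lt_of_le (hv0 0) (hvM 0)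
  have hMg : 0 < Mg := lt_of_lt_of_le (hh0 0) (hhM 0)
  have hcontv : Continuous v := Differentiable.continuous (fun t => (hd1 t).differentiableAt)
  have hcontv2 : Continuous v2 := Differentiable.continuous (fun t => (hd3 t).differentiableAt)
  -- Step A : lower bound for u := v2 - lam1 * v
  set u : ℝ → ℝ := fun t => v2 t - lam1 * v t with hudef
  set u' : ℝ → ℝ := fun t => v3 t - lam1 * v1 t with hu'def
  set u'' : ℝ → ℝ := fun t => lam2 * u t + (h t - bb * v t) with hu''def
  have hdu : ∀ t, HasDerivAt u (u' t) t := fun t => (hd3 t).sub ((hd1 t).const_mul lam1)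
  have hdu' : ∀ t, HasDerivAt u' (u'' t) t := by
    intro t
    have : HasDerivAt u' _ t := (hd4 t).sub ((hd2 t).const_mul lam1)
    convert this using 1
    simp only [hu''def, hudef]
    linear_combination (v2 t) * hsum - (v t) * hprod
  have hcontu : Continuous u := hcontv2.sub (continuous_const.mul hcontv)
  have hcontu'' : Continuous u'' :=
    (continuous_const.mul hcontu).add (hconth.sub (continuous_const.mul hcontv))
  set K : ℝ := max ((Mg + 1) / lam2) (lam1 * M0 + 1) with hKdef
  have hKlam : Mg + 1 ≤ lam2 * K := by
    have h1 : (Mg + 1) / lam2 ≤ K := le_max_left _ _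
    calc Mg + 1 = lam2 * ((Mg + 1) / lam2) := by field_simp
      _ ≤ lam2 * K := mul_le_mul_of_nonneg_left h1 hl2.le
  have hquad : ∀ t, u'' t ≤ lam2 * u t + Mg := by
    intro t
    have h1 := hhM t
    have h2 : 0 ≤ bb * v t := mul_nonneg hbb (hv0 t).le
    simp only [hu''def]
    linarith
  have claimL : ∀ t, -K < u t := by
    by_contra hc
    push_neg at hc
    obtain ⟨t₀, hu0⟩ := hc
    have hKM : lam1 * M0 + 1 ≤ K := le_max_right _ _
    rcases le_or_gt (u' t₀) 0 with hsign | hsign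
    · have hstay := stay_neg hl2 hdu hdu' hcontu'' hquad hKlam hu0 hsign
      have hv2neg : ∀ t ≥ t₀, v2 t ≤ -1 := by
        intro t ht
        have h1 := (hstay t ht).1
        have h2 : lam1 * v t ≤ lam1 * M0 := mul_le_mul_of_nonneg_left (hvM t) hl1.le
        simp only [hudef] at h1
        linarith
      exact blowdown hd1 hd2 hv0 hvM hv2neg
    · -- reflect time
      set ru : ℝ → ℝ := fun s => u (-s) with hrudef
      set ru' : ℝ → ℝ := fun s => -(u' (-s)) with hru'def
      set ru'' : ℝ → ℝ := fun s => u'' (-s) with hru''def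
      have hdru : ∀ s, HasDerivAt ru (ru' s) s := fun s => hasDerivAt_comp_neg (hdu (-s))
      have hdru' : ∀ s, HasDerivAt ru' (ru'' s) s := by
        intro s
        have := (hasDerivAt_comp_neg (hdu' (-s))).fun_neg
        simpa [hru'def, hru''def] using this
      have hcontru'' : Continuous ru'' := hcontu''.comp continuous_neg
      have hquad_r : ∀ s, ru'' s ≤ lam2 * ru s + Mg := fun s => hquad (-s)
      have h0r : ru (-t₀) ≤ -K := by simpa [hrudef] using hu0
      have h0r' : ru' (-t₀) ≤ 0 := by
        simp only [hru'def, neg_neg]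
        linarith
      have hstay := stay_neg hl2 hdru hdru' hcontru'' hquad_r hKlam h0r h0r'
      set rv : ℝ → ℝ := fun s => v (-s) with hrvdef
      set rv1 : ℝ → ℝ := fun s => -(v1 (-s)) with hrv1def
      set rv2 : ℝ → ℝ := fun s => v2 (-s) with hrv2def
      have hdrv : ∀ s, HasDerivAt rv (rv1 s) s := fun s => hasDerivAt_comp_neg (hd1 (-s))
      have hdrv1 : ∀ s, HasDerivAt rv1 (rv2 s) s := by
        intro s
        have := (hasDerivAt_comp_neg (hd2 (-s))).fun_neg
        simpa [hrv1def, hrv2def] using this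
      have hrv2neg : ∀ s ≥ -t₀, rv2 s ≤ -1 := by
        intro s hs
        have h1 := (hstay s hs).1
        have h2 : lam1 * v (-s) ≤ lam1 * M0 := mul_le_mul_of_nonneg_left (hvM (-s)) hl1.le
        simp only [hrudef, hudef] at h1
        simp only [hrv2def]
        linarith
      exact blowdown hdrv hdrv1 (fun s => hv0 (-s)) (fun s => hvM (-s)) hrv2neg
  -- Step B : barrier for φ := lam2 * v - v2
  set φ : ℝ → ℝ := fun t => lam2 * v t - v2 t with hφdef
  set φ' : ℝ → ℝ := fun t => lam2 * v1 t - v3 t with hφ'def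
  set φ'' : ℝ → ℝ := fun t => lam2 * v2 t - (A * v2 t - Bb * v t + h t) with hφ''def
  have hdφ : ∀ t, HasDerivAt φ (φ' t) t := fun t => ((hd1 t).const_mul lam2).sub (hd3 t)
  have hdφ' : ∀ t, HasDerivAt φ' (φ'' t) t := fun t => ((hd2 t).const_mul lam2).sub (hd4 t)
  have hk1 : (0:ℝ) < Real.sqrt lam1 := Real.sqrt_pos.2 hl1
  have hk2 : (0:ℝ) < Real.sqrt lam2 := Real.sqrt_pos.2 hl2
  have hsq1 : Real.sqrt lam1 ^ 2 = lam1 := Real.sq_sqrt hl1.le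
  have hsq2 : Real.sqrt lam2 ^ 2 = lam2 := Real.sq_sqrt hl2.le
  have hineq1 : ∀ t ≥ T, Real.sqrt lam1 ^ 2 * φ t ≤ φ'' t := by
    intro t ht
    rw [hsq1]
    have h1 := htail t ht
    simp only [hφdef, hφ''def]
    have hBb : Bb = lam1 * lam2 + bb := by linarith
    rw [← hsum, hBb]
    have expand : lam2 * v2 t - ((lam1 + lam2) * v2 t - (lam1 * lam2 + bb) * v t + h t) -
        lam1 * (lam2 * v t - v2 t) = bb * v t - h t := by ring
    linarith
  have hbd1 : ∀ t ≥ T, φ t ≤ lam2 * M0 + K := by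
    intro t ht
    have h1 := claimL t
    simp only [hudef] at h1
    have h2 : lam2 * v t ≤ lam2 * M0 := mul_le_mul_of_nonneg_left (hvM t) hl2.le
    have h3 : 0 ≤ lam1 * v t := mul_nonneg hl1.le (hv0 t).le
    simp only [hφdef]
    linarith
  have hbar1 := barrier hk1 hdφ hdφ' hineq1 hbd1
  set C₁ : ℝ := max (φ T) 0 with hC₁def
  have hC₁0 : 0 ≤ C₁ := le_max_right _ _
  -- Step C : barrier for u₂ := v + c₁ E
  set c₁ : ℝ := C₁ / (lam1 - lam2) with hc₁def
  have hc₁0 : 0 ≤ c₁ := div_nonneg hC₁0 (by linarith)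
  set E : ℝ → ℝ := fun t => Real.exp (-Real.sqrt lam1 * (t - T)) with hEdef
  have hdE : ∀ t, HasDerivAt E (-Real.sqrt lam1 * E t) t := by
    intro t
    have hl : HasDerivAt (fun t : ℝ => -Real.sqrt lam1 * (t - T)) (-Real.sqrt lam1) t := by
      simpa using ((hasDerivAt_id t).sub_const T).const_mul (-Real.sqrt lam1)
    simpa [hEdef, mul_comm] using hl.exp
  have hEpos : ∀ t, 0 < E t := fun t => Real.exp_pos _
  set u₂ : ℝ → ℝ := fun t => v t + c₁ * E t with hu₂def
  set u₂' : ℝ → ℝ := fun t => v1 t + c₁ * (-Real.sqrt lam1 * E t) with hu₂'def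
  set u₂'' : ℝ → ℝ := fun t => v2 t + c₁ * (lam1 * E t) with hu₂''def
  have hdu₂ : ∀ t, HasDerivAt u₂ (u₂' t) t := fun t => (hd1 t).add ((hdE t).const_mul c₁)
  have hdu₂' : ∀ t, HasDerivAt u₂' (u₂'' t) t := by
    intro t
    have hE2 : HasDerivAt (fun t => -Real.sqrt lam1 * E t)
        (-Real.sqrt lam1 * (-Real.sqrt lam1 * E t)) t := (hdE t).const_mul _
    have : HasDerivAt u₂' _ t := (hd2 t).add (hE2.const_mul c₁)
    convert this using 1
    simp only [hu₂''def]
    linear_combination (-(c₁ * E t)) * hsq1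
  have hc₁C : c₁ * (lam1 - lam2) = C₁ := div_mul_cancel₀ C₁ (by linarith : lam1 - lam2 ≠ 0)
  have hineq2 : ∀ t ≥ T, Real.sqrt lam2 ^ 2 * u₂ t ≤ u₂'' t := by
    intro t ht
    rw [hsq2]
    have h1 := hbar1 t ht
    have key : c₁ * (lam1 * E t) - lam2 * (c₁ * E t) = C₁ * E t := by
      linear_combination (E t) * hc₁C
    have h2 : φ t ≤ C₁ * E t := by
      have : Real.exp (-Real.sqrt lam1 * (t - T)) = E t := rfl
      calc φ t ≤ C₁ * Real.exp (-Real.sqrt lam1 * (t - T)) := h1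
        _ = C₁ * E t := by rw [this]
    simp only [hφdef] at h2
    simp only [hu₂def, hu₂''def]
    linarith
  have hbd2 : ∀ t ≥ T, u₂ t ≤ M0 + c₁ := by
    intro t ht
    have hE1 : E t ≤ 1 := by
      rw [hEdef]
      apply Real.exp_le_one_iff.2
      nlinarith
    have : c₁ * E t ≤ c₁ * 1 := mul_le_mul_of_nonneg_left hE1 hc₁0
    simp only [hu₂def]
    have := hvM t
    linarith
  have hbar2 := barrier hk2 hdu₂ hdu₂' hineq2 hbd2
  set C₂ : ℝ := max (u₂ T) 0 with hC₂def
  have hC₂0 : 0 ≤ C₂ := le_max_right _ _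
  have hvle : ∀ t ≥ T, v t ≤ C₂ * Real.exp (-Real.sqrt lam2 * (t - T)) := by
    intro t ht
    have h1 := hbar2 t ht
    have h2 : 0 ≤ c₁ * E t := mul_nonneg hc₁0 (hEpos t).le
    simp only [hu₂def] at h1
    linarith
  -- Final assembly
  set T' : ℝ := max T 0 with hT'def
  refine ⟨(C₂ + M0) * Real.exp (Real.sqrt lam2 * T'), fun t ht => ?_⟩
  have hTT' : T ≤ T' := le_max_left _ _
  have hT'0 : 0 ≤ T' := le_max_right _ _
  rcases le_or_gt T' t with hcase | hcase
  · have hTt : T ≤ t := hTT'.trans hcase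
    have h1 := hvle t hTt
    have h2 : Real.exp (-Real.sqrt lam2 * (t - T)) =
        Real.exp (Real.sqrt lam2 * T) * Real.exp (-Real.sqrt lam2 * t) := by
      rw [← Real.exp_add]; ring_nf
    have h3 : Real.exp (Real.sqrt lam2 * T) ≤ Real.exp (Real.sqrt lam2 * T') :=
      Real.exp_le_exp.2 (mul_le_mul_of_nonneg_left hTT' hk2.le)
    have h4 : 0 < Real.exp (-Real.sqrt lam2 * t) := Real.exp_pos _
    calc v t ≤ C₂ * (Real.exp (Real.sqrt lam2 * T) * Real.exp (-Real.sqrt lam2 * t)) := by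
          rw [← h2]; exact h1
      _ ≤ (C₂ + M0) * Real.exp (Real.sqrt lam2 * T') * Real.exp (-Real.sqrt lam2 * t) := by
          have : C₂ * Real.exp (Real.sqrt lam2 * T) ≤
              (C₂ + M0) * Real.exp (Real.sqrt lam2 * T') := by
            apply mul_le_mul (by linarith) h3 (Real.exp_pos _).le (by linarith)
          nlinarith [this, h4]
      _ = (C₂ + M0) * Real.exp (Real.sqrt lam2 * T') * Real.exp (-Real.sqrt lam2 * t) := rfl
  · have h1 : Real.exp (Real.sqrt lam2 * T') * Real.exp (-Real.sqrt lam2 * t) =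
        Real.exp (Real.sqrt lam2 * (T' - t)) := by
      rw [← Real.exp_add]; ring_nf
    have h2 : (1:ℝ) ≤ Real.exp (Real.sqrt lam2 * (T' - t)) := by
      apply Real.one_le_exp
      have : 0 ≤ T' - t := by linarith
      positivity
    calc v t ≤ M0 := hvM t
      _ ≤ (C₂ + M0) * Real.exp (Real.sqrt lam2 * (T' - t)) := by nlinarith
      _ = (C₂ + M0) * Real.exp (Real.sqrt lam2 * T') * Real.exp (-Real.sqrt lam2 * t) := by
          rw [mul_assoc, h1]

lemma g_small {g : ℝ → ℝ} {β bb : ℝ}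
    (hg1 : ContDiffOn ℝ 1 g (Set.Ioi 0))
    (hg0 : Filter.Tendsto g (nhdsWithin 0 (Set.Ioi 0)) (nhds 0))
    (hβ : Filter.Tendsto (deriv g) (nhdsWithin 0 (Set.Ioi 0)) (nhds β))
    (hbbβ : β < bb) :
    ∃ s₀ > 0, ∀ s, 0 < s → s ≤ s₀ → g s ≤ bb * s := by
  have hgdiff : ∀ x, 0 < x → DifferentiableAt ℝ g x := fun x hx =>
    (hg1.differentiableOn one_ne_zero).differentiableAt (Ioi_mem_nhds hx)
  have hev : ∀ᶠ x in nhdsWithin 0 (Set.Ioi 0), deriv g x < bb :=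
    hβ.eventually (eventually_lt_nhds hbbβ)
  obtain ⟨u, hu, hsub⟩ := mem_nhdsGT_iff_exists_Ioo_subset.1 hev
  have hu0 : (0:ℝ) < u := hu
  refine ⟨u / 2, by positivity, fun s hs0 hsu => ?_⟩
  have hsu' : s < u := by linarith
  have key : ∀ ε' ∈ Ioo (0:ℝ) s, g s ≤ g ε' + bb * (s - ε') := by
    intro ε' hε'
    have hcont : ContinuousOn g (Icc ε' s) := by
      apply (hg1.continuousOn).mono
      intro x hx
      exact lt_of_lt_of_le hε'.1 hx.1
    obtain ⟨c, hc, hceq⟩ := exists_hasDerivAt_eq_slope g (deriv g) hε'.2 hcont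
      (fun x hx => (hgdiff x (hε'.1.trans hx.1)).hasDerivAt)
    have hcmem : c ∈ Ioo (0:ℝ) u := ⟨hε'.1.trans hc.1, hc.2.trans hsu'⟩
    have hclt : deriv g c < bb := hsub hcmem
    rw [hceq] at hclt
    have hpos : 0 < s - ε' := by linarith [hε'.2]
    rw [div_lt_iff₀ hpos] at hclt
    linarith
  have htend : Filter.Tendsto (fun ε' => g ε' + bb * (s - ε')) (nhdsWithin 0 (Set.Ioi 0))
      (nhds (0 + bb * (s - 0))) := by
    apply Filter.Tendsto.add hg0
    exact ((continuous_const.mul (continuous_const.sub continuous_id)).tendsto 0).mono_left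
      nhdsWithin_le_nhds
  have hle : g s ≤ 0 + bb * (s - 0) := by
    apply ge_of_tendsto htend
    filter_upwards [Ioo_mem_nhdsGT_of_mem (show (0:ℝ) ∈ Ico (0:ℝ) s from ⟨le_refl 0, hs0⟩)]
      with ε' hε'
    exact key ε' hε'
  simpa using hle

set_option maxHeartbeats 1000000 in
theorem stmt_5 (n : ℕ) (hn : 5 ≤ n) (g : ℝ → ℝ) (hg : CondG n g)
    (A B : ℝ) (hA : A = ((n : ℝ) * ((n : ℝ) - 4) + 8) / 2)
    (hB : B = (n : ℝ) ^ 2 * ((n : ℝ) - 4) ^ 2 / 16)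
    (β : ℝ) (hβ : Filter.Tendsto (deriv g) (nhdsWithin 0 (Set.Ioi 0)) (nhds β))
    (μ : ℝ) (hμ : μ = (A - Real.sqrt (A ^ 2 - 4 * (B - β))) / 2)
    (v : ℝ → ℝ) (hv4 : ContDiff ℝ 4 v) (hvpos : ∀ t, 0 < v t) (hvsol : IsSol A B g v)
    (hlimT : Filter.Tendsto v Filter.atTop (nhds 0))
    (hlimB : Filter.Tendsto v Filter.atBot (nhds 0)) :
    ∀ ε > 0, ∃ C : ℝ, ∀ t : ℝ, v t ≤ C * Real.exp (-(Real.sqrt μ - ε) * |t|) := by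
  obtain ⟨hg1, hg2, hg3, hg4, ⟨β', hβ'0, hβ'lt, hβ'tend⟩, hg6, hg7⟩ := hg
  have hββ' : β = β' := tendsto_nhds_unique hβ hβ'tend
  have hβ0 : 0 ≤ β := hββ' ▸ hβ'0
  have hβB : β < B := by rw [hB, hββ']; exact hβ'lt
  have hx5 : (5:ℝ) ≤ (n:ℝ) := by exact_mod_cast hn
  have hxnn : (0:ℝ) ≤ (n:ℝ) * ((n:ℝ) - 4) :=
    mul_nonneg (by linarith) (by linarith)
  have hApos : 0 < A := by rw [hA]; linarith
  have hA2B : 4 * B < A ^ 2 := by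
    have key : (((n:ℝ) * ((n:ℝ) - 4) + 8) / 2) ^ 2 -
        4 * ((n:ℝ) ^ 2 * ((n:ℝ) - 4) ^ 2 / 16) = 4 * ((n:ℝ) * ((n:ℝ) - 4)) + 16 := by ring
    rw [hA, hB]
    linarith
  have hBβ : 0 < B - β := by linarith
  have hX0 : 0 < A ^ 2 - 4 * (B - β) := by linarith
  have hμpos : 0 < μ := by
    rw [hμ]
    have h1 : A ^ 2 - 4 * (B - β) < A ^ 2 := by linarith
    have h2 : Real.sqrt (A ^ 2 - 4 * (B - β)) < A := by
      calc Real.sqrt (A ^ 2 - 4 * (B - β)) < Real.sqrt (A ^ 2) := Real.sqrt_lt_sqrt hX0.le h1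
        _ = A := Real.sqrt_sq hApos.le
    linarith
  -- global bounds
  have hcontv : Continuous v := hv4.continuous
  obtain ⟨M0, hM0⟩ := bdd_of_tendsto_zero hcontv hlimT hlimB
  have hconth : Continuous (fun t => g (v t)) := by
    apply continuous_iff_continuousAt.2
    intro t
    exact (hg1.continuousOn.continuousAt (Ioi_mem_nhds (hvpos t))).comp hcontv.continuousAt
  have hvT : Filter.Tendsto v Filter.atTop (nhdsWithin 0 (Set.Ioi 0)) :=
    tendsto_nhdsWithin_of_tendsto_nhds_of_eventually_within v hlimT
      (Filter.Eventually.of_forall (fun t => hvpos t))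
  have hvB : Filter.Tendsto v Filter.atBot (nhdsWithin 0 (Set.Ioi 0)) :=
    tendsto_nhdsWithin_of_tendsto_nhds_of_eventually_within v hlimB
      (Filter.Eventually.of_forall (fun t => hvpos t))
  obtain ⟨Mg, hMg⟩ := bdd_of_tendsto_zero hconth (hg3.comp hvT) (hg3.comp hvB)
  have hh0 : ∀ t, 0 < g (v t) := fun t => hg2 _ (hvpos t)
  -- derivative chain
  have hdk : ∀ k : ℕ, k ≤ 3 → Differentiable ℝ (deriv^[k] v) := by
    intro k hk
    have h1 : ContDiff ℝ ((1:ℕ)) (deriv^[k] v) := by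
      apply ContDiff.iterate_deriv' 1 k
      have hle : ((1 + k : ℕ) : WithTop ℕ∞) ≤ ((4 : ℕ) : WithTop ℕ∞) := by
        exact_mod_cast (by omega : 1 + k ≤ 4)
      exact hv4.of_le (by exact_mod_cast hle)
    exact h1.differentiable (by simp)
  have hD : ∀ k : ℕ, k ≤ 3 → ∀ t, HasDerivAt (deriv^[k] v) (deriv^[k+1] v t) t := by
    intro k hk t
    rw [Function.iterate_succ_apply']
    exact ((hdk k hk) t).hasDerivAt
  have hD0 : ∀ t, HasDerivAt v (deriv^[1] v t) t := by
    intro t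
    have := hD 0 (by norm_num) t
    simpa using this
  have hD1 : ∀ t, HasDerivAt (deriv^[1] v) (deriv^[2] v t) t := hD 1 (by norm_num)
  have hD2 : ∀ t, HasDerivAt (deriv^[2] v) (deriv^[3] v t) t := hD 2 (by norm_num)
  have hODE : ∀ t, deriv^[4] v t = A * deriv^[2] v t - B * v t + g (v t) := by
    intro t
    have h := hvsol t
    rw [iteratedDeriv_eq_iterate, iteratedDeriv_eq_iterate] at h
    linarith
  have hD3 : ∀ t, HasDerivAt (deriv^[3] v) (A * deriv^[2] v t - B * v t + g (v t)) t := by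
    intro t
    rw [← hODE t, Function.iterate_succ_apply']
    exact ((hdk 3 le_rfl) t).hasDerivAt
  intro ε hε
  rcases le_or_gt (Real.sqrt μ) ε with hcase | hcase
  · refine ⟨M0, fun t => ?_⟩
    have h1 : (1:ℝ) ≤ Real.exp (-(Real.sqrt μ - ε) * |t|) := by
      apply Real.one_le_exp
      have h := mul_nonneg (sub_nonneg.2 hcase) (abs_nonneg t)
      have e : -(Real.sqrt μ - ε) * |t| = (ε - Real.sqrt μ) * |t| := by ring
      rw [e]; exact h
    have h2 := hM0 t
    have hM0pos : 0 < M0 := lt_of_lt_of_le (hvpos t) h2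
    calc v t ≤ M0 := h2
      _ = M0 * 1 := by ring
      _ ≤ M0 * Real.exp (-(Real.sqrt μ - ε) * |t|) :=
          mul_le_mul_of_nonneg_left h1 hM0pos.le
  · -- main case
    obtain ⟨k, hk⟩ : ∃ k : ℝ, k = Real.sqrt μ - ε := ⟨_, rfl⟩
    have hk0 : 0 < k := by rw [hk]; linarith
    have hsμ : 0 < Real.sqrt μ := Real.sqrt_pos.2 hμpos
    obtain ⟨ρ, hρ⟩ : ∃ r : ℝ, r = ε * (2 * Real.sqrt μ - ε) := ⟨_, rfl⟩
    have hρ0 : 0 < ρ := by rw [hρ]; apply mul_pos hε; linarith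
    obtain ⟨δ, hδ⟩ : ∃ d : ℝ, d = min ((B - β) / 2) ((ρ / 2) ^ 2) := ⟨_, rfl⟩
    have hδ0 : 0 < δ := by rw [hδ]; exact lt_min (by linarith) (by positivity)
    obtain ⟨bb, hbbdef⟩ : ∃ b : ℝ, b = β + δ := ⟨_, rfl⟩
    have hbb0 : 0 ≤ bb := by rw [hbbdef]; linarith
    have hbbB : bb < B := by
      have h1 : δ ≤ (B - β) / 2 := by rw [hδ]; exact min_le_left _ _
      rw [hbbdef]; linarith
    obtain ⟨Y, hY⟩ : ∃ y : ℝ, y = A ^ 2 - 4 * (B - bb) := ⟨_, rfl⟩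
    have hYX : Y = (A ^ 2 - 4 * (B - β)) + 4 * δ := by rw [hY, hbbdef]; ring
    have hY0 : 0 < Y := by rw [hYX]; linarith
    have hYA : Y < A ^ 2 := by rw [hY]; nlinarith
    obtain ⟨lam2, hlam2⟩ : ∃ l : ℝ, l = (A - Real.sqrt Y) / 2 := ⟨_, rfl⟩
    obtain ⟨lam1, hlam1⟩ : ∃ l : ℝ, l = A - lam2 := ⟨_, rfl⟩
    have hsqY : Real.sqrt Y * Real.sqrt Y = Y := Real.mul_self_sqrt hY0.le
    have hsqrtYA : Real.sqrt Y < A := by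
      calc Real.sqrt Y < Real.sqrt (A ^ 2) := Real.sqrt_lt_sqrt hY0.le hYA
        _ = A := Real.sqrt_sq hApos.le
    have hsqrtY0 : 0 < Real.sqrt Y := Real.sqrt_pos.2 hY0
    have hl2 : 0 < lam2 := by rw [hlam2]; linarith
    have hl12 : lam2 < lam1 := by rw [hlam1, hlam2]; linarith
    have hsum : lam1 + lam2 = A := by rw [hlam1]; ring
    have hprod : lam1 * lam2 = B - bb := by
      rw [hlam1, hlam2]
      linear_combination (-(1:ℝ)/4) * hsqY + (-(1:ℝ)/4) * hY
    -- k² < lam2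
    have hsqX : Real.sqrt (A ^ 2 - 4 * (B - β)) * Real.sqrt (A ^ 2 - 4 * (B - β)) = A ^ 2 - 4 * (B - β) := Real.mul_self_sqrt hX0.le
    have hsqδ : Real.sqrt δ ≤ ρ / 2 := by
      have h1 : δ ≤ (ρ / 2) ^ 2 := by rw [hδ]; exact min_le_right _ _
      calc Real.sqrt δ ≤ Real.sqrt ((ρ / 2) ^ 2) := Real.sqrt_le_sqrt h1
        _ = ρ / 2 := Real.sqrt_sq (by positivity)
    have hsqδ0 : Real.sqrt δ * Real.sqrt δ = δ := Real.mul_self_sqrt hδ0.le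
    have hsqrtY_le : Real.sqrt Y ≤ Real.sqrt (A ^ 2 - 4 * (B - β)) + 2 * Real.sqrt δ := by
      have h1 : Y ≤ (Real.sqrt (A ^ 2 - 4 * (B - β)) + 2 * Real.sqrt δ) ^ 2 := by
        have h2 : (Real.sqrt (A ^ 2 - 4 * (B - β)) + 2 * Real.sqrt δ) ^ 2 =
            (A ^ 2 - 4 * (B - β)) + 4 * (Real.sqrt (A ^ 2 - 4 * (B - β)) * Real.sqrt δ) + 4 * δ := by
          linear_combination hsqX + 4 * hsqδ0
        have h3 : 0 ≤ Real.sqrt (A ^ 2 - 4 * (B - β)) * Real.sqrt δ :=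
          mul_nonneg (Real.sqrt_nonneg _) (Real.sqrt_nonneg _)
        rw [hYX, h2]
        linarith
      calc Real.sqrt Y ≤ Real.sqrt ((Real.sqrt (A ^ 2 - 4 * (B - β)) + 2 * Real.sqrt δ) ^ 2) := Real.sqrt_le_sqrt h1
        _ = Real.sqrt (A ^ 2 - 4 * (B - β)) + 2 * Real.sqrt δ := Real.sqrt_sq
            (by positivity)
    have hklam2 : k ^ 2 < lam2 := by
      have h1 : μ - Real.sqrt δ ≤ lam2 := by
        rw [hlam2, hμ]
        linarith
      have h2 : k ^ 2 = μ - ρ := by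
        have h3 : Real.sqrt μ ^ 2 = μ := Real.sq_sqrt hμpos.le
        rw [hk, hρ]
        linear_combination h3
      linarith
    have hklam2' : k ≤ Real.sqrt lam2 := by
      calc k = Real.sqrt (k ^ 2) := (Real.sqrt_sq hk0.le).symm
        _ ≤ Real.sqrt lam2 := Real.sqrt_le_sqrt hklam2.le
    -- tail smallness
    obtain ⟨s₀, hs₀, hsmall⟩ := g_small hg1 hg3 hβ (show β < bb by rw [hbbdef]; linarith)
    obtain ⟨Tr, hTr⟩ := Filter.eventually_atTop.1 (hlimT.eventually (eventually_lt_nhds hs₀))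
    obtain ⟨Tl, hTl⟩ := Filter.eventually_atBot.1 (hlimB.eventually (eventually_lt_nhds hs₀))
    have htail_r : ∀ t ≥ Tr, g (v t) ≤ bb * v t :=
      fun t ht => hsmall (v t) (hvpos t) (hTr t ht).le
    obtain ⟨Cr, hCr⟩ := tail_decay hD0 hD1 hD2 hD3 hconth hl2 hl12 hsum hprod hbb0
      hvpos hM0 hh0 hMg htail_r
    -- reflected solution
    have hR0 : ∀ s, HasDerivAt (fun r => v (-r)) (-(deriv^[1] v (-s))) s :=
      fun s => hasDerivAt_comp_neg (hD0 (-s))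
    have hR1 : ∀ s, HasDerivAt (fun r => -(deriv^[1] v (-r))) (deriv^[2] v (-s)) s := by
      intro s
      simpa using (hasDerivAt_comp_neg (hD1 (-s))).fun_neg
    have hR2 : ∀ s, HasDerivAt (fun r => deriv^[2] v (-r)) (-(deriv^[3] v (-s))) s :=
      fun s => hasDerivAt_comp_neg (hD2 (-s))
    have hR3 : ∀ s, HasDerivAt (fun r => -(deriv^[3] v (-r)))
        (A * (fun r => deriv^[2] v (-r)) s - B * (fun r => v (-r)) s + g ((fun r => v (-r)) s)) s := by
      intro s
      have := (hasDerivAt_comp_neg (hD3 (-s))).fun_neg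
      simpa using this
    have htail_l : ∀ s ≥ -Tl, g ((fun r => v (-r)) s) ≤ bb * (fun r => v (-r)) s := by
      intro s hs
      exact hsmall _ (hvpos (-s)) (hTl (-s) (by linarith)).le
    obtain ⟨Cl, hCl⟩ := tail_decay hR0 hR1 hR2 hR3 (hconth.comp continuous_neg) hl2 hl12 hsum
      hprod hbb0 (fun s => hvpos (-s)) (fun s => hM0 (-s)) (fun s => hh0 (-s))
      (fun s => hMg (-s)) htail_l
    have hCr0 : 0 < Cr := by
      have h1 := hCr 0 le_rfl
      simp only [mul_zero, neg_zero, Real.exp_zero, mul_one] at h1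
      exact lt_of_lt_of_le (hvpos 0) h1
    have hCl0 : 0 < Cl := by
      have h1 := hCl 0 le_rfl
      simp only [mul_zero, neg_zero, Real.exp_zero, mul_one, neg_zero] at h1
      exact lt_of_lt_of_le (hvpos 0) h1
    refine ⟨max Cr Cl, fun t => ?_⟩
    rcases le_or_gt 0 t with htt | htt
    · have h1 := hCr t htt
      have h2 : Real.exp (-Real.sqrt lam2 * t) ≤ Real.exp (-k * t) := by
        apply Real.exp_le_exp.2
        have h := mul_le_mul_of_nonneg_right hklam2' htt
        linarith
      rw [abs_of_nonneg htt, ← hk]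
      calc v t ≤ Cr * Real.exp (-Real.sqrt lam2 * t) := h1
        _ ≤ Cr * Real.exp (-k * t) := mul_le_mul_of_nonneg_left h2 hCr0.le
        _ ≤ max Cr Cl * Real.exp (-k * t) :=
            mul_le_mul_of_nonneg_right (le_max_left _ _) (Real.exp_pos _).le
    · have h1 := hCl (-t) (by linarith)
      simp only [neg_neg] at h1
      have h2 : Real.exp (-Real.sqrt lam2 * -t) ≤ Real.exp (-k * -t) := by
        apply Real.exp_le_exp.2
        have h := mul_le_mul_of_nonneg_right hklam2' (show (0:ℝ) ≤ -t by linarith)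
        linarith
      rw [abs_of_neg htt, ← hk]
      calc v t ≤ Cl * Real.exp (-Real.sqrt lam2 * -t) := h1
        _ ≤ Cl * Real.exp (-k * -t) := mul_le_mul_of_nonneg_left h2 hCl0.le
        _ ≤ max Cr Cl * Real.exp (-k * -t) :=
            mul_le_mul_of_nonneg_right (le_max_right _ _) (Real.exp_pos _).le
end
end

section
/- Let v ∈ C⁴((0, ∞)) be a positive solution of the ODE v''''(t) − A·v''(t) + B·v(t) = g(v(t)) on (0, ∞), and suppose that the limit a := lim_{t→∞} v(t) exists in [0, ∞] (as an extended real number). Then either a = 0 or a = a₀. -/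
open Real Filter Set

noncomputable section

lemma tendsto_atTop_of_deriv_ge (f : ℝ → ℝ) (c : ℝ) (hc : 0 < c)
    (hd : ∀ᶠ t in atTop, DifferentiableAt ℝ f t)
    (hge : ∀ᶠ t in atTop, c ≤ deriv f t) : Tendsto f atTop atTop := by
  obtain ⟨T, hT⟩ := eventually_atTop.1 (hd.and hge)
  have hdiff : ∀ t ∈ Set.Ici T, DifferentiableAt ℝ f t := fun t ht => (hT t ht).1
  set G : ℝ → ℝ := fun t => f t - c * t with hG
  have hGd : ∀ t ∈ Set.Ici T, DifferentiableAt ℝ G t := fun t ht =>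
    (hdiff t ht).sub ((differentiableAt_id.const_mul c))
  have hmono : MonotoneOn G (Set.Ici T) := by
    apply monotoneOn_of_deriv_nonneg (convex_Ici T)
    · exact fun t ht => (hGd t ht).continuousAt.continuousWithinAt
    · intro t ht
      rw [interior_Ici] at ht
      exact (hGd t (mem_Ici.2 (le_of_lt ht))).differentiableWithinAt
    · intro t ht
      rw [interior_Ici] at ht
      have h1 : deriv G t = deriv f t - c := by
        have : HasDerivAt G (deriv f t - c) t := by
          exact ((hdiff t (mem_Ici.2 (le_of_lt ht))).hasDerivAt).sub
            ((hasDerivAt_id t).const_mul c |>.congr_deriv (by ring))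
        exact this.deriv
      rw [h1]
      have := (hT t (le_of_lt ht)).2
      linarith
  have key : ∀ t ≥ T, G T + c * t ≤ f t := by
    intro t ht
    have := hmono (self_mem_Ici) (ht : t ∈ Set.Ici T) ht
    simp only [hG] at this ⊢
    linarith
  apply tendsto_atTop_mono' atTop (eventually_atTop.2 ⟨T, key⟩)
  exact tendsto_atTop_add_const_left _ _ (Tendsto.const_mul_atTop hc tendsto_id)

lemma tendsto_atBot_of_deriv_le (f : ℝ → ℝ) (c : ℝ) (hc : c < 0)
    (hd : ∀ᶠ t in atTop, DifferentiableAt ℝ f t)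
    (hge : ∀ᶠ t in atTop, deriv f t ≤ c) : Tendsto f atTop atBot := by
  have h := tendsto_atTop_of_deriv_ge (fun t => -f t) (-c) (by linarith)
    (hd.mono fun t ht => ht.neg)
    (by
      filter_upwards [hd, hge] with t ht hle
      rw [deriv.fun_neg]
      linarith)
  have : Tendsto (fun t => -(-f t)) atTop atBot := tendsto_neg_atTop_atBot.comp h
  simpa using this

lemma tendsto_atTop_of_deriv_tendsto_atTop (f : ℝ → ℝ)
    (hd : ∀ᶠ t in atTop, DifferentiableAt ℝ f t)
    (h : Tendsto (deriv f) atTop atTop) : Tendsto f atTop atTop :=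
  tendsto_atTop_of_deriv_ge f 1 one_pos hd (h.eventually_ge_atTop 1)

lemma tendsto_atBot_of_deriv_tendsto_atBot (f : ℝ → ℝ)
    (hd : ∀ᶠ t in atTop, DifferentiableAt ℝ f t)
    (h : Tendsto (deriv f) atTop atBot) : Tendsto f atTop atBot :=
  tendsto_atBot_of_deriv_le f (-1) (by norm_num) hd (h.eventually_le_atBot (-1))

lemma tendsto_atTop_of_deriv_tendsto_pos (f : ℝ → ℝ) (L : ℝ) (hL : 0 < L)
    (hd : ∀ᶠ t in atTop, DifferentiableAt ℝ f t)
    (h : Tendsto (deriv f) atTop (nhds L)) : Tendsto f atTop atTop :=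
  tendsto_atTop_of_deriv_ge f (L/2) (by linarith) hd
    (h.eventually (eventually_ge_nhds (by linarith)))

lemma tendsto_atBot_of_deriv_tendsto_neg (f : ℝ → ℝ) (L : ℝ) (hL : L < 0)
    (hd : ∀ᶠ t in atTop, DifferentiableAt ℝ f t)
    (h : Tendsto (deriv f) atTop (nhds L)) : Tendsto f atTop atBot :=
  tendsto_atBot_of_deriv_le f (L/2) (by linarith) hd
    (h.eventually (eventually_le_nhds (by linarith)))

set_option maxHeartbeats 4000000 in
theorem stmt_8 (n : ℕ) (hn : 5 ≤ n) (g : ℝ → ℝ) (hg : CondG n g)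
    (A B : ℝ) (hA : A = ((n : ℝ) * ((n : ℝ) - 4) + 8) / 2)
    (hB : B = (n : ℝ) ^ 2 * ((n : ℝ) - 4) ^ 2 / 16)
    (a₀ : ℝ) (ha₀ : 0 < a₀) (hga₀ : g a₀ = B * a₀)
    (v : ℝ → ℝ) (hv4 : ContDiffOn ℝ 4 v (Set.Ioi 0)) (hvpos : ∀ t > 0, 0 < v t)
    (hvsol : ∀ t > 0, iteratedDeriv 4 v t - A * iteratedDeriv 2 v t + B * v t = g (v t))
    (a : EReal) (hlim : Filter.Tendsto (fun t => (v t : EReal)) Filter.atTop (nhds a)) :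
    a = 0 ∨ a = (a₀ : EReal) := by
  have hn5 : (5 : ℝ) ≤ (n : ℝ) := by exact_mod_cast hn
  have hApos : 0 < A := by rw [hA]; nlinarith
  have hBpos : 0 < B := by rw [hB]; nlinarith
  -- derivative bookkeeping
  have hcd1 : ContDiffOn ℝ 3 (deriv^[1] v) (Set.Ioi 0) := by
    simpa using hv4.deriv_of_isOpen isOpen_Ioi (by norm_num : (3:WithTop ℕ∞) + 1 ≤ 4)
  have hcd2 : ContDiffOn ℝ 2 (deriv^[2] v) (Set.Ioi 0) := by
    rw [show deriv^[2] v = deriv (deriv^[1] v) from Function.iterate_succ_apply' deriv 1 v]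
    exact hcd1.deriv_of_isOpen isOpen_Ioi (by norm_num : (2:WithTop ℕ∞) + 1 ≤ 3)
  have hcd3 : ContDiffOn ℝ 1 (deriv^[3] v) (Set.Ioi 0) := by
    rw [show deriv^[3] v = deriv (deriv^[2] v) from Function.iterate_succ_apply' deriv 2 v]
    exact hcd2.deriv_of_isOpen isOpen_Ioi (by norm_num : (1:WithTop ℕ∞) + 1 ≤ 2)
  have hd0 : ∀ t > (0:ℝ), DifferentiableAt ℝ v t := fun t ht =>
    ((hv4.differentiableOn (by norm_num)).differentiableAt (Ioi_mem_nhds ht))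
  have hd1 : ∀ t > (0:ℝ), DifferentiableAt ℝ (deriv^[1] v) t := fun t ht =>
    ((hcd1.differentiableOn (by norm_num)).differentiableAt (Ioi_mem_nhds ht))
  have hd2 : ∀ t > (0:ℝ), DifferentiableAt ℝ (deriv^[2] v) t := fun t ht =>
    ((hcd2.differentiableOn (by norm_num)).differentiableAt (Ioi_mem_nhds ht))
  have hd3 : ∀ t > (0:ℝ), DifferentiableAt ℝ (deriv^[3] v) t := fun t ht =>
    ((hcd3.differentiableOn (by norm_num)).differentiableAt (Ioi_mem_nhds ht))
  have hDer0 : ∀ t > (0:ℝ), HasDerivAt v (deriv^[1] v t) t := by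
    intro t ht
    have := (hd0 t ht).hasDerivAt
    simpa using this
  have hDer1 : ∀ t > (0:ℝ), HasDerivAt (deriv^[1] v) (deriv^[2] v t) t := by
    intro t ht
    have := (hd1 t ht).hasDerivAt
    rwa [show deriv (deriv^[1] v) t = deriv^[2] v t from
      congrFun (Function.iterate_succ_apply' deriv 1 v).symm t |>.symm ▸ rfl] at this
  have hDer2 : ∀ t > (0:ℝ), HasDerivAt (deriv^[2] v) (deriv^[3] v t) t := by
    intro t ht
    have := (hd2 t ht).hasDerivAt
    rwa [show deriv (deriv^[2] v) t = deriv^[3] v t from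
      congrFun (Function.iterate_succ_apply' deriv 2 v).symm t |>.symm ▸ rfl] at this
  have hDer3 : ∀ t > (0:ℝ), HasDerivAt (deriv^[3] v) (deriv^[4] v t) t := by
    intro t ht
    have := (hd3 t ht).hasDerivAt
    rwa [show deriv (deriv^[3] v) t = deriv^[4] v t from
      congrFun (Function.iterate_succ_apply' deriv 3 v).symm t |>.symm ▸ rfl] at this
  have hODE : ∀ t > (0:ℝ), deriv^[4] v t = A * deriv^[2] v t - B * v t + g (v t) := by
    intro t ht
    have := hvsol t ht
    rw [iteratedDeriv_eq_iterate, iteratedDeriv_eq_iterate] at this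
    linarith
  -- the limit is ≥ 0
  have h0le : (0 : EReal) ≤ a := by
    refine ge_of_tendsto hlim ?_
    filter_upwards [eventually_ge_atTop (1:ℝ)] with t ht
    exact_mod_cast le_of_lt (hvpos t (by linarith))
  -- strict monotonicity of g t / t, for uniqueness of a₀
  have huniq : ∀ ℓ : ℝ, 0 < ℓ → g ℓ = B * ℓ → ℓ = a₀ := by
    intro ℓ hℓ hgℓ
    have hgdiff : ∀ t > (0:ℝ), DifferentiableAt ℝ g t := fun t ht =>
      (hg.1.contDiffAt (Ioi_mem_nhds ht)).differentiableAt one_ne_zero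
    have hmono : StrictMonoOn (fun t => g t / t) (Set.Ioi 0) := by
      apply strictMonoOn_of_deriv_pos (convex_Ioi 0)
      · exact fun t ht => ((hgdiff t ht).div differentiableAt_id
          (ne_of_gt (mem_Ioi.1 ht))).continuousAt.continuousWithinAt
      · intro t ht
        rw [interior_Ioi] at ht
        have ht' : (0:ℝ) < t := ht
        have hdd : HasDerivAt (fun s => g s / s) ((deriv g t * t - g t * 1) / t ^ 2) t :=
          ((hgdiff t ht').hasDerivAt).div (hasDerivAt_id t) (ne_of_gt ht')
        rw [hdd.deriv]
        have h1 := (hg.2.2.2.1 t ht').1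
        have h2 : g t < deriv g t * t := by
          have := (div_lt_iff₀ ht').1 h1
          linarith
        apply div_pos (by linarith) (by positivity)
    have e1 : g ℓ / ℓ = B := by rw [hgℓ]; field_simp
    have e2 : g a₀ / a₀ = B := by rw [hga₀]; field_simp
    exact hmono.injOn (mem_Ioi.2 hℓ) (mem_Ioi.2 ha₀) (by rw [e1, e2])
  -- main case analysis on a
  induction a using EReal.rec with
  | bot => simp at h0le
  | coe ℓ =>
    have hvℓ : Tendsto v atTop (nhds ℓ) := EReal.tendsto_coe.1 hlim
    have hℓ0 : 0 ≤ ℓ := by exact_mod_cast h0le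
    rcases eq_or_lt_of_le hℓ0 with h | hℓpos
    · left; exact_mod_cast h.symm
    · right
      -- show g ℓ = B ℓ
      have hgcont : ContinuousAt g ℓ := hg.1.continuousOn.continuousAt (Ioi_mem_nhds hℓpos)
      have hgv : Tendsto (fun t => g (v t)) atTop (nhds (g ℓ)) :=
        hgcont.tendsto.comp hvℓ
      set L : ℝ := g ℓ - B * ℓ with hLdef
      have hw : Tendsto (fun t => g (v t) - B * v t) atTop (nhds L) :=
        hgv.sub (hvℓ.const_mul B)
      set h : ℝ → ℝ := fun t => deriv^[2] v t - A * v t with hhdef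
      have hderivh : ∀ t > (0:ℝ), HasDerivAt h (deriv^[3] v t - A * deriv^[1] v t) t := by
        intro t ht
        exact (hDer2 t ht).sub ((hDer0 t ht).const_mul A)
      have hdh_diff : ∀ t > (0:ℝ), DifferentiableAt ℝ (deriv h) t := by
        intro t ht
        have heq : deriv h =ᶠ[nhds t] (fun s => deriv^[3] v s - A * deriv^[1] v s) := by
          filter_upwards [Ioi_mem_nhds ht] with s hs
          exact (hderivh s hs).deriv
        rw [heq.differentiableAt_iff]
        exact (hd3 t ht).sub ((hd1 t ht).const_mul A)
      have hderiv2h : ∀ t > (0:ℝ), deriv (deriv h) t = deriv^[4] v t - A * deriv^[2] v t := by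
        intro t ht
        have heq : deriv h =ᶠ[nhds t] (fun s => deriv^[3] v s - A * deriv^[1] v s) := by
          filter_upwards [Ioi_mem_nhds ht] with s hs
          exact (hderivh s hs).deriv
        rw [heq.deriv_eq]
        exact ((hDer3 t ht).sub ((hDer1 t ht).const_mul A)).deriv
      have h2tendsto : Tendsto (deriv (deriv h)) atTop (nhds L) := by
        apply hw.congr'
        filter_upwards [eventually_gt_atTop (0:ℝ)] with t ht
        rw [hderiv2h t ht, hODE t ht]
        ring
      have hh_diff_ev : ∀ᶠ t in atTop, DifferentiableAt ℝ h t := by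
        filter_upwards [eventually_gt_atTop (0:ℝ)] with t ht
        exact (hderivh t ht).differentiableAt
      have hdh_diff_ev : ∀ᶠ t in atTop, DifferentiableAt ℝ (deriv h) t := by
        filter_upwards [eventually_gt_atTop (0:ℝ)] with t ht
        exact hdh_diff t ht
      have hd1_ev : ∀ᶠ t in atTop, DifferentiableAt ℝ (deriv^[1] v) t := by
        filter_upwards [eventually_gt_atTop (0:ℝ)] with t ht
        exact hd1 t ht
      have hd0_ev : ∀ᶠ t in atTop, DifferentiableAt ℝ v t := by
        filter_upwards [eventually_gt_atTop (0:ℝ)] with t ht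
        exact hd0 t ht
      have hderiv_v1 : deriv (deriv^[1] v) = deriv^[2] v :=
        (Function.iterate_succ_apply' deriv 1 v).symm
      have hderiv_v0 : deriv v = deriv^[1] v := rfl
      have hL0 : L = 0 := by
        by_contra hLne
        rcases lt_or_gt_of_ne hLne with hLneg | hLpos
        · -- L < 0 : v → -∞
          have t1 : Tendsto (deriv h) atTop atBot :=
            tendsto_atBot_of_deriv_tendsto_neg (deriv h) L hLneg hdh_diff_ev h2tendsto
          have t2 : Tendsto h atTop atBot :=
            tendsto_atBot_of_deriv_tendsto_atBot h hh_diff_ev t1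
          have t3 : Tendsto (deriv^[2] v) atTop atBot := by
            have : Tendsto (fun t => A * v t + h t) atTop atBot :=
              Filter.Tendsto.add_atBot (hvℓ.const_mul A) t2
            apply this.congr
            intro t; simp only [hhdef]; ring
          have t4 : Tendsto (deriv^[1] v) atTop atBot := by
            apply tendsto_atBot_of_deriv_tendsto_atBot _ hd1_ev
            rwa [hderiv_v1]
          have t5 : Tendsto v atTop atBot := by
            apply tendsto_atBot_of_deriv_tendsto_atBot _ hd0_ev
            rwa [hderiv_v0]
          exact absurd hvℓ (t5.not_tendsto (disjoint_nhds_atBot ℓ).symm)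
        · -- L > 0 : v → +∞
          have t1 : Tendsto (deriv h) atTop atTop :=
            tendsto_atTop_of_deriv_tendsto_pos (deriv h) L hLpos hdh_diff_ev h2tendsto
          have t2 : Tendsto h atTop atTop :=
            tendsto_atTop_of_deriv_tendsto_atTop h hh_diff_ev t1
          have t3 : Tendsto (deriv^[2] v) atTop atTop := by
            have : Tendsto (fun t => A * v t + h t) atTop atTop :=
              Filter.Tendsto.add_atTop (hvℓ.const_mul A) t2
            apply this.congr
            intro t; simp only [hhdef]; ring
          have t4 : Tendsto (deriv^[1] v) atTop atTop := by
            apply tendsto_atTop_of_deriv_tendsto_atTop _ hd1_ev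
            rwa [hderiv_v1]
          have t5 : Tendsto v atTop atTop := by
            apply tendsto_atTop_of_deriv_tendsto_atTop _ hd0_ev
            rwa [hderiv_v0]
          exact absurd hvℓ (t5.not_tendsto (disjoint_nhds_atTop ℓ).symm)
      have : g ℓ = B * ℓ := by
        have : g ℓ - B * ℓ = 0 := hL0
        linarith
      exact EReal.coe_eq_coe_iff.2 (huniq ℓ hℓpos this)

  | top =>
    exfalso
    obtain ⟨q, c₀, hq1, hc₀, hgrow⟩ := hg.2.2.2.2.2.1
    have hq0 : (0:ℝ) < q - 1 := by linarith
    have hvTop : Tendsto v atTop atTop := by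
      rw [tendsto_atTop]
      intro b
      filter_upwards [EReal.tendsto_nhds_top_iff_real.1 hlim b] with t ht
      exact le_of_lt (by exact_mod_cast ht)
    have hgc : ContinuousOn g (Set.Ioi 0) := hg.1.continuousOn
    have huIcc : ∀ x : ℝ, 0 < x → Set.uIcc 1 x ⊆ Set.Ioi 0 := by
      intro x hx y hy
      rcases Set.mem_uIcc.1 hy with ⟨h1, _⟩ | ⟨h1, _⟩
      · exact mem_Ioi.2 (by linarith)
      · exact mem_Ioi.2 (by linarith)
    have hint : ∀ x : ℝ, 0 < x → IntervalIntegrable g MeasureTheory.volume 1 x := fun x hx =>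
      (hgc.mono (huIcc x hx)).intervalIntegrable
    set G : ℝ → ℝ := fun x => ∫ s in (1:ℝ)..x, g s with hGdef
    have hGderiv : ∀ x : ℝ, 0 < x → HasDerivAt G (g x) x := fun x hx =>
      intervalIntegral.integral_hasDerivAt_right (hint x hx)
        (ContinuousOn.stronglyMeasurableAtFilter isOpen_Ioi hgc x hx)
        (hgc.continuousAt (Ioi_mem_nhds hx))
    have hGlow : ∀ x : ℝ, 1 ≤ x → c₀ * (x ^ (q+1) - 1) / (q+1) ≤ G x := by
      intro x hx
      have hxpos : (0:ℝ) < x := by linarith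
      have hcont2 : ContinuousOn (fun s : ℝ => c₀ * s ^ q) (Set.uIcc 1 x) := by
        apply ContinuousOn.mul continuousOn_const
        intro s hs
        have hs0 : 0 < s := huIcc x hxpos hs
        exact (Real.continuousAt_rpow_const s q (Or.inl (ne_of_gt hs0))).continuousWithinAt
      have hint2 : IntervalIntegrable (fun s : ℝ => c₀ * s ^ q) MeasureTheory.volume 1 x :=
        hcont2.intervalIntegrable
      have hmono := intervalIntegral.integral_mono_on hx hint2 (hint x hxpos)
        (fun s hs => hgrow s hs.1)
      have hval : (∫ s in (1:ℝ)..x, c₀ * s ^ q) = c₀ * ((x ^ (q+1) - 1) / (q+1)) := by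
        rw [intervalIntegral.integral_const_mul,
          integral_rpow (Or.inl (by linarith : (-1:ℝ) < q))]
        rw [Real.one_rpow]
      rw [hval] at hmono
      calc c₀ * (x ^ (q+1) - 1) / (q+1) = c₀ * ((x ^ (q+1) - 1) / (q+1)) := by ring
      _ ≤ G x := hmono
    have hPhiTop : Tendsto (fun x : ℝ => G x - B * x ^ 2 / 2) atTop atTop := by
      have hlow : Tendsto (fun x : ℝ => c₀ * (x ^ (q+1) - 1) / (q+1) - B * x ^ 2 / 2)
          atTop atTop := by
        have hinner : Tendsto (fun x : ℝ => c₀ / (q+1) * x ^ (q-1) - B/2) atTop atTop :=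
          tendsto_atTop_add_const_right _ _
            (Tendsto.const_mul_atTop (by positivity) (tendsto_rpow_atTop hq0))
        have h1 : Tendsto (fun x : ℝ => x ^ 2 * (c₀ / (q+1) * x ^ (q-1) - B/2) - c₀/(q+1))
            atTop atTop :=
          tendsto_atTop_add_const_right _ _
            (Filter.Tendsto.atTop_mul_atTop₀ (tendsto_pow_atTop two_ne_zero) hinner)
        apply h1.congr'
        filter_upwards [eventually_gt_atTop (0:ℝ)] with x hx
        have hsplit : x ^ (q+1) = x ^ (q-1) * x ^ 2 := by
          rw [← Real.rpow_natCast x 2, ← Real.rpow_add hx]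
          congr 1
          push_cast
          ring
        rw [hsplit]
        field_simp
        ring
      apply tendsto_atTop_mono' atTop ?_ hlow
      filter_upwards [eventually_ge_atTop (1:ℝ)] with x hx
      have := hGlow x hx
      linarith
    have hcompPhi : Tendsto (fun t => G (v t) - B * (v t) ^ 2 / 2) atTop atTop :=
      hPhiTop.comp hvTop
    set E : ℝ → ℝ := fun t => deriv^[3] v t * deriv^[1] v t - (deriv^[2] v t) ^ 2 / 2
        - A * (deriv^[1] v t) ^ 2 / 2 + B * (v t) ^ 2 / 2 - G (v t) with hEdef
    have hE0 : ∀ t, 0 < t → HasDerivAt E 0 t := by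
      intro t ht
      have hGv : HasDerivAt (fun s => G (v s)) (g (v t) * deriv^[1] v t) t := by
        have := (hGderiv (v t) (hvpos t ht)).comp t (hDer0 t ht)
        exact this
      have h1 : HasDerivAt (fun s => deriv^[3] v s * deriv^[1] v s)
          (deriv^[4] v t * deriv^[1] v t + deriv^[3] v t * deriv^[2] v t) t :=
        (hDer3 t ht).mul (hDer1 t ht)
      have h2 : HasDerivAt (fun s => (deriv^[2] v s) ^ 2 / 2)
          (deriv^[2] v t * deriv^[3] v t) t := by
        have := ((hDer2 t ht).pow 2).div_const 2
        apply this.congr_deriv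
        push_cast
        ring
      have h3 : HasDerivAt (fun s => A * (deriv^[1] v s) ^ 2 / 2)
          (A * (deriv^[1] v t * deriv^[2] v t)) t := by
        have h := (((hDer1 t ht).pow 2).const_mul A).div_const 2
        apply h.congr_deriv
        push_cast
        ring
      have h4 : HasDerivAt (fun s => B * (v s) ^ 2 / 2) (B * (v t * deriv^[1] v t)) t := by
        have h := (((hDer0 t ht).pow 2).const_mul B).div_const 2
        apply h.congr_deriv
        push_cast
        ring
      have hbig : HasDerivAt E
          ((deriv^[4] v t * deriv^[1] v t + deriv^[3] v t * deriv^[2] v t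
            - deriv^[2] v t * deriv^[3] v t - A * (deriv^[1] v t * deriv^[2] v t)
            + B * (v t * deriv^[1] v t)) - g (v t) * deriv^[1] v t) t :=
        (((h1.sub h2).sub h3).add h4).sub hGv
      apply hbig.congr_deriv
      rw [hODE t ht]
      ring
    have hEc : ∀ t, 1 ≤ t → E t = E 1 := by
      intro t ht
      have := constant_of_has_deriv_right_zero (f := E) (a := 1) (b := t)
        (fun s hs => (hE0 s (lt_of_lt_of_le one_pos hs.1)).continuousAt.continuousWithinAt)
        (fun s hs => (hE0 s (lt_of_lt_of_le one_pos hs.1)).hasDerivWithinAt)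
      exact this t (right_mem_Icc.2 ht)
    have hKtop : Tendsto (fun t => deriv^[3] v t * deriv^[1] v t) atTop atTop := by
      apply tendsto_atTop_mono' atTop ?_
        (tendsto_atTop_add_const_left _ (E 1) hcompPhi)
      filter_upwards [eventually_ge_atTop (1:ℝ)] with t ht
      have hEt := hEc t ht
      have hA1 : 0 ≤ A * (deriv^[1] v t) ^ 2 / 2 := by positivity
      have hsq : 0 ≤ (deriv^[2] v t) ^ 2 / 2 := by positivity
      have hexp : E t = deriv^[3] v t * deriv^[1] v t - (deriv^[2] v t) ^ 2 / 2
          - A * (deriv^[1] v t) ^ 2 / 2 + B * (v t) ^ 2 / 2 - G (v t) := by rw [hEdef]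
      have hE1 : E 1 = deriv^[3] v t * deriv^[1] v t - (deriv^[2] v t) ^ 2 / 2
          - A * (deriv^[1] v t) ^ 2 / 2 + B * (v t) ^ 2 / 2 - G (v t) := hEt.symm.trans hexp
      linarith
    have hStop : Tendsto (fun t => deriv^[2] v t * deriv^[1] v t) atTop atTop := by
      apply tendsto_atTop_of_deriv_ge _ 1 one_pos
      · filter_upwards [eventually_gt_atTop (0:ℝ)] with t ht
        exact (hd2 t ht).mul (hd1 t ht)
      · filter_upwards [hKtop.eventually_ge_atTop 1, eventually_gt_atTop (0:ℝ)] with t h1 ht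
        rw [HasDerivAt.deriv (f := fun t => deriv^[2] v t * deriv^[1] v t) ((hDer2 t ht).mul (hDer1 t ht))]
        nlinarith only [h1, sq_nonneg (deriv^[2] v t)]
    have hD1sq : Tendsto (fun t => (deriv^[1] v t) ^ 2) atTop atTop := by
      apply tendsto_atTop_of_deriv_ge _ 1 one_pos
      · filter_upwards [eventually_gt_atTop (0:ℝ)] with t ht
        exact (hd1 t ht).pow 2
      · filter_upwards [hStop.eventually_ge_atTop 1, eventually_gt_atTop (0:ℝ)] with t h1 ht
        rw [HasDerivAt.deriv (f := fun t => deriv^[1] v t ^ 2) ((hDer1 t ht).pow 2)]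
        push_cast
        nlinarith only [h1]
    obtain ⟨T₁', hT₁'⟩ := eventually_atTop.1
      ((hD1sq.eventually_ge_atTop 1).and (hvTop.eventually_ge_atTop 1))
    set T₁ := max T₁' 1 with hT₁def
    have hT₁1 : (1:ℝ) ≤ T₁ := le_max_right _ _
    have hT₁pos : (0:ℝ) < T₁ := lt_of_lt_of_le one_pos hT₁1
    have hT₁sq : ∀ t, T₁ ≤ t → 1 ≤ (deriv^[1] v t) ^ 2 := fun t ht =>
      (hT₁' t (le_trans (le_max_left _ _) ht)).1
    have hD1ne : ∀ t, T₁ ≤ t → deriv^[1] v t ≠ 0 := by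
      intro t ht h0
      have := hT₁sq t ht
      rw [h0] at this
      norm_num at this
    have hD1pos : ∀ t, T₁ ≤ t → 0 < deriv^[1] v t := by
      intro t ht
      rcases (hD1ne t ht).lt_or_gt with hneg | hpos
      · exfalso
        have hallneg : ∀ s, T₁ ≤ s → deriv^[1] v s < 0 := by
          intro s hs
          rcases (hD1ne s hs).lt_or_gt with h | h
          · exact h
          · exfalso
            rcases le_total s t with hst | hts
            · have hcont : ContinuousOn (deriv^[1] v) (Set.Icc s t) := fun r hr =>
                (hd1 r (lt_of_lt_of_le hT₁pos (le_trans hs hr.1))).continuousAt.continuousWithinAt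
              have : (0:ℝ) ∈ Set.Icc (deriv^[1] v t) (deriv^[1] v s) :=
                ⟨le_of_lt hneg, le_of_lt h⟩
              obtain ⟨r, hr, hr0⟩ := intermediate_value_Icc' hst hcont this
              exact hD1ne r (le_trans hs hr.1) hr0
            · have hcont : ContinuousOn (deriv^[1] v) (Set.Icc t s) := fun r hr =>
                (hd1 r (lt_of_lt_of_le hT₁pos (le_trans ht hr.1))).continuousAt.continuousWithinAt
              have : (0:ℝ) ∈ Set.Icc (deriv^[1] v t) (deriv^[1] v s) :=
                ⟨le_of_lt hneg, le_of_lt h⟩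
              obtain ⟨r, hr, hr0⟩ := intermediate_value_Icc hts hcont this
              exact hD1ne r (le_trans ht hr.1) hr0
        have hanti : AntitoneOn v (Set.Ici T₁) := by
          apply antitoneOn_of_deriv_nonpos (convex_Ici T₁)
          · exact fun s hs =>
              (hd0 s (lt_of_lt_of_le hT₁pos hs)).continuousAt.continuousWithinAt
          · intro s hs
            rw [interior_Ici] at hs
            exact (hd0 s (lt_of_lt_of_le hT₁pos (le_of_lt hs))).differentiableWithinAt
          · intro s hs
            rw [interior_Ici] at hs
            have : deriv v s = deriv^[1] v s := by rw [Function.iterate_one]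
            rw [this]
            exact le_of_lt (hallneg s (le_of_lt hs))
        obtain ⟨t₂, ht₂⟩ := eventually_atTop.1
          ((hvTop.eventually_ge_atTop (v T₁ + 1)).and (eventually_ge_atTop T₁))
        have h1 := (ht₂ t₂ le_rfl).1
        have h2 := hanti self_mem_Ici (ht₂ t₂ le_rfl).2 (ht₂ t₂ le_rfl).2
        linarith
      · exact hpos
    have hD2posE : ∀ᶠ t in atTop, 0 < deriv^[2] v t := by
      filter_upwards [hStop.eventually_ge_atTop 1, eventually_ge_atTop T₁] with t h1 ht
      have hp := hD1pos t ht
      nlinarith only [h1, hp]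
    have hD3posE : ∀ᶠ t in atTop, 0 < deriv^[3] v t := by
      filter_upwards [hKtop.eventually_ge_atTop 1, eventually_ge_atTop T₁] with t h1 ht
      have hp := hD1pos t ht
      nlinarith only [h1, hp]
    set M : ℝ := max 1 ((2*B/c₀) ^ (1/(q-1))) with hMdef
    have hMx : ∀ x : ℝ, M ≤ x → B * x ≤ c₀/2 * x ^ q := by
      intro x hx
      have hx1 : (1:ℝ) ≤ x := le_trans (le_max_left _ _) hx
      have hx0 : (0:ℝ) < x := by linarith
      have h2 : ((2*B/c₀) ^ (1/(q-1))) ^ (q-1) = 2*B/c₀ := by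
        rw [← Real.rpow_mul (by positivity), one_div, inv_mul_cancel₀ (ne_of_gt hq0),
          Real.rpow_one]
      have h1 : 2*B/c₀ ≤ x ^ (q-1) := by
        rw [← h2]
        exact Real.rpow_le_rpow (Real.rpow_nonneg (by positivity) _)
          (le_trans (le_max_right _ _) hx) (le_of_lt hq0)
      have hxq : x ^ q = x ^ (q-1) * x := by
        rw [← Real.rpow_add_one (ne_of_gt hx0)]
        congr 1
        ring
      rw [hxq]
      have h3 : (2*B/c₀) * x ≤ x ^ (q-1) * x := mul_le_mul_of_nonneg_right h1 (le_of_lt hx0)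
      have h4 : c₀/2 * ((2*B/c₀) * x) = B * x := by field_simp
      have h5 : c₀/2 * ((2*B/c₀) * x) ≤ c₀/2 * (x ^ (q-1) * x) :=
        mul_le_mul_of_nonneg_left h3 (by positivity)
      rw [h4] at h5
      exact h5
    obtain ⟨T₀, hT₀⟩ := eventually_atTop.1
      ((hD2posE.and hD3posE).and ((hvTop.eventually_ge_atTop M).and (hvTop.eventually_ge_atTop 1)))
    set T := max T₀ T₁ with hTdef
    have hTT₁ : T₁ ≤ T := le_max_right _ _
    have hT1le : (1:ℝ) ≤ T := le_trans hT₁1 hTT₁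
    have hTpos : (0:ℝ) < T := lt_of_lt_of_le one_pos hT1le
    have hvT1 : ∀ t, T ≤ t → 1 ≤ v t := fun t ht =>
      (hT₀ t (le_trans (le_max_left _ _) ht)).2.2
    have hvTM : ∀ t, T ≤ t → M ≤ v t := fun t ht =>
      (hT₀ t (le_trans (le_max_left _ _) ht)).2.1
    have hD1T : ∀ t, T ≤ t → 0 < deriv^[1] v t := fun t ht => hD1pos t (le_trans hTT₁ ht)
    have hD2T : ∀ t, T ≤ t → 0 < deriv^[2] v t := fun t ht =>
      (hT₀ t (le_trans (le_max_left _ _) ht)).1.1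
    have hD3T : ∀ t, T ≤ t → 0 < deriv^[3] v t := fun t ht =>
      (hT₀ t (le_trans (le_max_left _ _) ht)).1.2
    set c : ℝ := c₀/2 with hcdef
    have hc : 0 < c := by positivity
    have hD4T : ∀ t, T ≤ t → c * (v t) ^ q ≤ deriv^[4] v t := by
      intro t ht
      have ht0 : (0:ℝ) < t := lt_of_lt_of_le hTpos ht
      rw [hODE t ht0]
      have hg1 := hgrow (v t) (hvT1 t ht)
      have hm := hMx (v t) (hvTM t ht)
      have hAD2 : 0 < A * deriv^[2] v t := mul_pos hApos (hD2T t ht)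
      have h2c : c₀ * v t ^ q = 2 * (c * v t ^ q) := by rw [hcdef]; ring
      linarith only [hg1, hm, hAD2, h2c]
    -- comparison function setup
    set α : ℝ := 4/(q-1) with hαdef
    have hα : 0 < α := by positivity
    set P2 : ℝ := α*(α+1) with hP2def
    set P3 : ℝ := α*(α+1)*(α+2) with hP3def
    set P4 : ℝ := α*(α+1)*(α+2)*(α+3) with hP4def
    have hP4 : 0 < P4 := by positivity
    set K : ℝ := (P4/c) ^ (1/(q-1)) with hKdef
    have hKpos : 0 < K := Real.rpow_pos_of_pos (by positivity) _
    have hKq : c * K ^ q = K * P4 := by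
      have h2 : K ^ (q-1) = P4/c := by
        rw [hKdef, ← Real.rpow_mul (by positivity), one_div, inv_mul_cancel₀ (ne_of_gt hq0),
          Real.rpow_one]
      have h3 : K ^ q = K ^ (q-1) * K := by
        rw [← Real.rpow_add_one (ne_of_gt hKpos)]
        congr 1
        ring
      rw [h3, h2]
      field_simp
    set m : ℝ := min (min (v T) (deriv^[1] v T)) (min (deriv^[2] v T) (deriv^[3] v T)) with hmdef
    have hmpos : 0 < m := by
      apply lt_min
      · exact lt_min (hvpos T hTpos) (hD1T T le_rfl)
      · exact lt_min (hD2T T le_rfl) (hD3T T le_rfl)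
    set Cm : ℝ := K * (P4 + 1) with hCmdef
    have hCm : 0 < Cm := by positivity
    set R : ℝ := max 1 ((Cm/m + 1) ^ (1/α)) with hRdef
    have hR1 : (1:ℝ) ≤ R := le_max_left _ _
    have hR0 : (0:ℝ) < R := lt_of_lt_of_le one_pos hR1
    have hRα : Cm/m + 1 ≤ R ^ α := by
      have hb : (0:ℝ) < Cm/m + 1 := by positivity
      calc Cm/m + 1 = ((Cm/m + 1) ^ (1/α)) ^ α := by
            rw [← Real.rpow_mul (le_of_lt hb), one_div, inv_mul_cancel₀ (ne_of_gt hα),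
              Real.rpow_one]
      _ ≤ R ^ α := Real.rpow_le_rpow (Real.rpow_nonneg (le_of_lt hb) _)
            (le_max_right _ _) (le_of_lt hα)
    set t₀ : ℝ := T + R with ht₀def
    have hTt₀ : T < t₀ := by simp only [ht₀def]; linarith
    have ht₀T : t₀ - T = R := by simp only [ht₀def]; ring
    -- bound helper
    have hinit : ∀ Pc e : ℝ, K * Pc ≤ Cm → e ≤ -α → K * Pc * R ^ e < m := by
      intro Pc e h1 h2
      have hRe : R ^ e ≤ R ^ (-α) := Real.rpow_le_rpow_of_exponent_le hR1 h2
      have hRa : 0 < R ^ α := Real.rpow_pos_of_pos hR0 α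
      have hchain : K * Pc * R ^ e ≤ Cm * R ^ (-α) := by
        calc K * Pc * R ^ e ≤ Cm * R ^ e :=
              mul_le_mul_of_nonneg_right h1 (Real.rpow_nonneg (le_of_lt hR0) e)
        _ ≤ Cm * R ^ (-α) := mul_le_mul_of_nonneg_left hRe (le_of_lt hCm)
      have hfin : Cm * R ^ (-α) < m := by
        rw [Real.rpow_neg (le_of_lt hR0), ← div_eq_mul_inv, div_lt_iff₀ hRa]
        have hkey : m * (Cm/m + 1) = Cm + m := by field_simp
        have h6 : m * (Cm/m + 1) ≤ m * R ^ α := mul_le_mul_of_nonneg_left hRα (le_of_lt hmpos)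
        linarith only [hkey, h6, hmpos]
      linarith only [hchain, hfin]
    -- derivative helper for power comparison functions
    have hUderiv : ∀ (Kc β s : ℝ), s < t₀ →
        HasDerivAt (fun r => Kc * (t₀ - r) ^ β) (Kc * (-β) * (t₀ - s) ^ (β - 1)) s := by
      intro Kc β s hs
      have h1 : HasDerivAt (fun r : ℝ => t₀ - r) (-1) s := by
        simpa using (hasDerivAt_id s).const_sub t₀
      have h2 := h1.rpow_const (p := β) (Or.inl (ne_of_gt (sub_pos.2 hs)))
      have h3 := h2.const_mul Kc
      apply h3.congr_deriv
      ring
    set U0 : ℝ → ℝ := fun s => K * (t₀ - s) ^ (-α) with hU0def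
    set U1 : ℝ → ℝ := fun s => K * α * (t₀ - s) ^ (-α-1) with hU1def
    set U2 : ℝ → ℝ := fun s => K * P2 * (t₀ - s) ^ (-α-2) with hU2def
    set U3 : ℝ → ℝ := fun s => K * P3 * (t₀ - s) ^ (-α-3) with hU3def
    set U4 : ℝ → ℝ := fun s => K * P4 * (t₀ - s) ^ (-α-4) with hU4def
    have hU0d : ∀ s, s < t₀ → HasDerivAt U0 (U1 s) s := by
      intro s hs
      have := hUderiv K (-α) s hs
      apply this.congr_deriv
      simp only [hU1def]
      ring_nf
    have hU1d : ∀ s, s < t₀ → HasDerivAt U1 (U2 s) s := by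
      intro s hs
      have := hUderiv (K * α) (-α-1) s hs
      apply this.congr_deriv
      simp only [hU2def, hP2def]
      ring_nf
    have hU2d : ∀ s, s < t₀ → HasDerivAt U2 (U3 s) s := by
      intro s hs
      have := hUderiv (K * P2) (-α-2) s hs
      apply this.congr_deriv
      simp only [hU3def, hP3def, hP2def]
      ring_nf
    have hU3d : ∀ s, s < t₀ → HasDerivAt U3 (U4 s) s := by
      intro s hs
      have := hUderiv (K * P3) (-α-3) s hs
      apply this.congr_deriv
      simp only [hU4def, hP4def, hP3def]
      ring_nf
    have hU0pos : ∀ s, s < t₀ → 0 < U0 s := fun s hs =>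
      mul_pos hKpos (Real.rpow_pos_of_pos (sub_pos.2 hs) _)
    have hU4eq : ∀ s, s < t₀ → U4 s = c * (U0 s) ^ q := by
      intro s hs
      have hx : (0:ℝ) < t₀ - s := sub_pos.2 hs
      have h1 : (K * (t₀ - s) ^ (-α)) ^ q = K ^ q * (t₀ - s) ^ (-α * q) := by
        rw [Real.mul_rpow (le_of_lt hKpos) (Real.rpow_nonneg (le_of_lt hx) _),
          ← Real.rpow_mul (le_of_lt hx)]
      have hexp : -α * q = -α - 4 := by
        have : α * (q - 1) = 4 := by
          rw [hαdef]; field_simp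
        linarith only [this]
      simp only [hU4def, hU0def]
      rw [h1, hexp]
      have : c * (K ^ q * (t₀ - s) ^ (-α-4)) = (c * K ^ q) * (t₀ - s) ^ (-α-4) := by ring
      rw [this, hKq]
    -- initial strict bounds at T
    have ha2 : 0 < α * α := mul_pos hα hα
    have ha3 : 0 < α * (α * α) := mul_pos hα ha2
    have ha4 : 0 < α * (α * (α * α)) := mul_pos hα ha3
    have hP1leP4 : α ≤ P4 + 1 := by
      rw [hP4def]; nlinarith only [hα, ha2, ha3, ha4]
    have hP2leP4 : P2 ≤ P4 + 1 := by
      rw [hP2def, hP4def]; nlinarith only [hα, ha2, ha3, ha4]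
    have hP3leP4 : P3 ≤ P4 + 1 := by
      rw [hP3def, hP4def]; nlinarith only [hα, ha2, ha3, ha4]
    have hKP0 : K * 1 ≤ Cm := by
      rw [hCmdef]; nlinarith only [hKpos, hP4]
    have hKP1 : K * α ≤ Cm := by
      rw [hCmdef]; exact mul_le_mul_of_nonneg_left hP1leP4 (le_of_lt hKpos)
    have hKP2 : K * P2 ≤ Cm := by
      rw [hCmdef]; exact mul_le_mul_of_nonneg_left hP2leP4 (le_of_lt hKpos)
    have hKP3 : K * P3 ≤ Cm := by
      rw [hCmdef]; exact mul_le_mul_of_nonneg_left hP3leP4 (le_of_lt hKpos)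
    have hU0T : U0 T < v T := by
      have h := hinit 1 (-α) hKP0 le_rfl
      have : U0 T = K * 1 * R ^ (-α) := by
        simp only [hU0def]; rw [ht₀T]; ring
      rw [this]
      calc K * 1 * R ^ (-α) < m := h
      _ ≤ v T := le_trans (min_le_left _ _) (min_le_left _ _)
    have hU1T : U1 T < deriv^[1] v T := by
      have h := hinit α (-α-1) hKP1 (by linarith only [hα])
      have : U1 T = K * α * R ^ (-α-1) := by simp only [hU1def]; rw [ht₀T]
      rw [this]
      calc K * α * R ^ (-α-1) < m := h
      _ ≤ deriv^[1] v T := le_trans (min_le_left _ _) (min_le_right _ _)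
    have hU2T : U2 T < deriv^[2] v T := by
      have h := hinit P2 (-α-2) hKP2 (by linarith only [hα])
      have : U2 T = K * P2 * R ^ (-α-2) := by simp only [hU2def]; rw [ht₀T]
      rw [this]
      calc K * P2 * R ^ (-α-2) < m := h
      _ ≤ deriv^[2] v T := le_trans (min_le_right _ _) (min_le_left _ _)
    have hU3T : U3 T < deriv^[3] v T := by
      have h := hinit P3 (-α-3) hKP3 (by linarith only [hα])
      have : U3 T = K * P3 * R ^ (-α-3) := by simp only [hU3def]; rw [ht₀T]
      rw [this]
      calc K * P3 * R ^ (-α-3) < m := h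
      _ ≤ deriv^[3] v T := le_trans (min_le_right _ _) (min_le_right _ _)
    -- the comparison claim
    set F : ℝ → ℝ := fun s => min (min (v s - U0 s) (deriv^[1] v s - U1 s))
        (min (deriv^[2] v s - U2 s) (deriv^[3] v s - U3 s)) with hFdef
    have hFcont : ∀ s, 0 < s → s < t₀ → ContinuousAt F s := by
      intro s hs0 hst
      have c0 : ContinuousAt (fun r => v r - U0 r) s :=
        ((hd0 s hs0).continuousAt).sub (hU0d s hst).continuousAt
      have c1 : ContinuousAt (fun r => deriv^[1] v r - U1 r) s :=
        ((hd1 s hs0).continuousAt).sub (hU1d s hst).continuousAt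
      have c2 : ContinuousAt (fun r => deriv^[2] v r - U2 r) s :=
        ((hd2 s hs0).continuousAt).sub (hU2d s hst).continuousAt
      have c3 : ContinuousAt (fun r => deriv^[3] v r - U3 r) s :=
        ((hd3 s hs0).continuousAt).sub (hU3d s hst).continuousAt
      exact (c0.min c1).min (c2.min c3)
    have hFT : 0 < F T := by
      simp only [hFdef]
      apply lt_min
      · exact lt_min (by linarith) (by linarith)
      · exact lt_min (by linarith) (by linarith)
    have hclaim : ∀ s, s ∈ Set.Ico T t₀ → 0 < F s := by
      by_contra hcon
      push_neg at hcon
      obtain ⟨s₀, hs₀mem, hs₀⟩ := hcon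
      set Sb : Set ℝ := {s : ℝ | s ∈ Set.Ico T t₀ ∧ F s ≤ 0} with hSbdef
      have hSb_ne : Sb.Nonempty := ⟨s₀, hs₀mem, hs₀⟩
      have hSb_bdd : BddBelow Sb := ⟨T, fun x hx => hx.1.1⟩
      set τ := sInf Sb with hτdef
      have hτT : T ≤ τ := le_csInf hSb_ne (fun x hx => hx.1.1)
      have hτlt : τ < t₀ := lt_of_le_of_lt (csInf_le hSb_bdd ⟨hs₀mem, hs₀⟩) hs₀mem.2
      have hτpos : 0 < τ := lt_of_lt_of_le hTpos hτT
      have hbefore : ∀ s, T ≤ s → s < τ → 0 < F s := by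
        intro s h1 h2
        by_contra hcneg
        push_neg at hcneg
        have : τ ≤ s := csInf_le hSb_bdd ⟨⟨h1, lt_trans h2 hτlt⟩, hcneg⟩
        linarith
      have hFτ : F τ ≤ 0 := by
        by_contra hposF
        push_neg at hposF
        have hev : ∀ᶠ s in nhds τ, 0 < F s :=
          (hFcont τ hτpos hτlt).eventually (eventually_gt_nhds hposF)
        obtain ⟨ε, hε, hball⟩ := Metric.eventually_nhds_iff.1 hev
        have hlb : τ + ε ≤ τ := by
          apply le_csInf hSb_ne
          intro x hx
          by_contra hxc
          push_neg at hxc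
          have hxτ : τ ≤ x := csInf_le hSb_bdd hx
          have hdist : dist x τ < ε := by
            rw [Real.dist_eq, abs_of_nonneg (by linarith)]
            linarith
          exact absurd (hball hdist) (not_lt.2 hx.2)
        linarith
      have hτT' : T < τ := by
        rcases eq_or_lt_of_le hτT with he | h
        · exfalso; rw [← he] at hFτ; linarith
        · exact h
      -- gaps from F positivity before τ
      have hgap0 : ∀ s, T ≤ s → s < τ → U0 s < v s := by
        intro s h1 h2
        have := hbefore s h1 h2
        simp only [hFdef] at this
        have h3 := lt_of_lt_of_le this (min_le_left _ _)
        have h4 := lt_of_lt_of_le h3 (min_le_left _ _)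
        linarith
      have hgap1 : ∀ s, T ≤ s → s < τ → U1 s < deriv^[1] v s := by
        intro s h1 h2
        have := hbefore s h1 h2
        simp only [hFdef] at this
        have h3 := lt_of_lt_of_le this (min_le_left _ _)
        have h4 := lt_of_lt_of_le h3 (min_le_right _ _)
        linarith
      have hgap2 : ∀ s, T ≤ s → s < τ → U2 s < deriv^[2] v s := by
        intro s h1 h2
        have := hbefore s h1 h2
        simp only [hFdef] at this
        have h3 := lt_of_lt_of_le this (min_le_right _ _)
        have h4 := lt_of_lt_of_le h3 (min_le_left _ _)
        linarith
      have hgap3 : ∀ s, T ≤ s → s < τ → U3 s < deriv^[3] v s := by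
        intro s h1 h2
        have := hbefore s h1 h2
        simp only [hFdef] at this
        have h3 := lt_of_lt_of_le this (min_le_right _ _)
        have h4 := lt_of_lt_of_le h3 (min_le_right _ _)
        linarith
      -- monotone gap argument: i-th gap monotone on [T, τ]
      have hIooFacts : ∀ s, s ∈ Set.Ioo T τ → T ≤ s ∧ s < τ ∧ 0 < s ∧ s < t₀ := by
        intro s hs
        exact ⟨le_of_lt hs.1, hs.2, lt_of_lt_of_le hTpos (le_of_lt hs.1),
          lt_trans hs.2 hτlt⟩
      have hIccFacts : ∀ s, s ∈ Set.Icc T τ → 0 < s ∧ s < t₀ := by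
        intro s hs
        exact ⟨lt_of_lt_of_le hTpos hs.1, lt_of_le_of_lt hs.2 hτlt⟩
      have hmono3 : MonotoneOn (fun s => deriv^[3] v s - U3 s) (Set.Icc T τ) := by
        apply monotoneOn_of_deriv_nonneg (convex_Icc T τ)
        · intro s hs
          obtain ⟨hs0, hst⟩ := hIccFacts s hs
          exact (((hd3 s hs0).continuousAt).sub (hU3d s hst).continuousAt).continuousWithinAt
        · intro s hs
          rw [interior_Icc] at hs
          obtain ⟨h1, h2, h3, h4⟩ := hIooFacts s hs
          exact ((hd3 s h3).sub (hU3d s h4).differentiableAt).differentiableWithinAt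
        · intro s hs
          rw [interior_Icc] at hs
          obtain ⟨h1, h2, h3, h4⟩ := hIooFacts s hs
          rw [HasDerivAt.deriv (f := fun s => deriv^[3] v s - U3 s) ((hDer3 s h3).sub (hU3d s h4))]
          have h5 := hD4T s h1
          have hU0p := hU0pos s h4
          have hgap := hgap0 s h1 h2
          have h6 : (U0 s) ^ q ≤ (v s) ^ q :=
            Real.rpow_le_rpow (le_of_lt hU0p) (le_of_lt hgap) (by linarith)
          have h7 := mul_le_mul_of_nonneg_left h6 (le_of_lt hc)
          rw [hU4eq s h4]
          linarith
      have hd3τ : 0 < deriv^[3] v τ - U3 τ := by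
        have := hmono3 (left_mem_Icc.2 (le_of_lt hτT')) (right_mem_Icc.2 (le_of_lt hτT'))
          (le_of_lt hτT')
        simp only at this
        linarith
      have hmono2 : MonotoneOn (fun s => deriv^[2] v s - U2 s) (Set.Icc T τ) := by
        apply monotoneOn_of_deriv_nonneg (convex_Icc T τ)
        · intro s hs
          obtain ⟨hs0, hst⟩ := hIccFacts s hs
          exact (((hd2 s hs0).continuousAt).sub (hU2d s hst).continuousAt).continuousWithinAt
        · intro s hs
          rw [interior_Icc] at hs
          obtain ⟨h1, h2, h3, h4⟩ := hIooFacts s hs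
          exact ((hd2 s h3).sub (hU2d s h4).differentiableAt).differentiableWithinAt
        · intro s hs
          rw [interior_Icc] at hs
          obtain ⟨h1, h2, h3, h4⟩ := hIooFacts s hs
          rw [HasDerivAt.deriv (f := fun s => deriv^[2] v s - U2 s) ((hDer2 s h3).sub (hU2d s h4))]
          have := hgap3 s h1 h2
          linarith
      have hd2τ : 0 < deriv^[2] v τ - U2 τ := by
        have := hmono2 (left_mem_Icc.2 (le_of_lt hτT')) (right_mem_Icc.2 (le_of_lt hτT'))
          (le_of_lt hτT')
        simp only at this
        linarith
      have hmono1 : MonotoneOn (fun s => deriv^[1] v s - U1 s) (Set.Icc T τ) := by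
        apply monotoneOn_of_deriv_nonneg (convex_Icc T τ)
        · intro s hs
          obtain ⟨hs0, hst⟩ := hIccFacts s hs
          exact (((hd1 s hs0).continuousAt).sub (hU1d s hst).continuousAt).continuousWithinAt
        · intro s hs
          rw [interior_Icc] at hs
          obtain ⟨h1, h2, h3, h4⟩ := hIooFacts s hs
          exact ((hd1 s h3).sub (hU1d s h4).differentiableAt).differentiableWithinAt
        · intro s hs
          rw [interior_Icc] at hs
          obtain ⟨h1, h2, h3, h4⟩ := hIooFacts s hs
          rw [HasDerivAt.deriv (f := fun s => deriv^[1] v s - U1 s) ((hDer1 s h3).sub (hU1d s h4))]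
          have := hgap2 s h1 h2
          linarith
      have hd1τ : 0 < deriv^[1] v τ - U1 τ := by
        have := hmono1 (left_mem_Icc.2 (le_of_lt hτT')) (right_mem_Icc.2 (le_of_lt hτT'))
          (le_of_lt hτT')
        simp only at this
        linarith
      have hmono0 : MonotoneOn (fun s => v s - U0 s) (Set.Icc T τ) := by
        apply monotoneOn_of_deriv_nonneg (convex_Icc T τ)
        · intro s hs
          obtain ⟨hs0, hst⟩ := hIccFacts s hs
          exact (((hd0 s hs0).continuousAt).sub (hU0d s hst).continuousAt).continuousWithinAt
        · intro s hs
          rw [interior_Icc] at hs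
          obtain ⟨h1, h2, h3, h4⟩ := hIooFacts s hs
          exact ((hd0 s h3).sub (hU0d s h4).differentiableAt).differentiableWithinAt
        · intro s hs
          rw [interior_Icc] at hs
          obtain ⟨h1, h2, h3, h4⟩ := hIooFacts s hs
          rw [HasDerivAt.deriv (f := fun s => v s - U0 s) ((hDer0 s h3).sub (hU0d s h4))]
          have := hgap1 s h1 h2
          linarith
      have hd0τ : 0 < v τ - U0 τ := by
        have := hmono0 (left_mem_Icc.2 (le_of_lt hτT')) (right_mem_Icc.2 (le_of_lt hτT'))
          (le_of_lt hτT')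
        simp only at this
        linarith
      have : 0 < F τ := by
        simp only [hFdef]
        exact lt_min (lt_min hd0τ hd1τ) (lt_min hd2τ hd3τ)
      linarith
    -- blow-up of U0 near t₀ beats boundedness of v : contradiction
    have hvmono : MonotoneOn v (Set.Ici T) := by
      apply monotoneOn_of_deriv_nonneg (convex_Ici T)
      · exact fun s hs => (hd0 s (lt_of_lt_of_le hTpos hs)).continuousAt.continuousWithinAt
      · intro s hs
        rw [interior_Ici] at hs
        exact (hd0 s (lt_of_lt_of_le hTpos (le_of_lt hs))).differentiableWithinAt
      · intro s hs
        rw [interior_Ici] at hs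
        have heq : deriv v s = deriv^[1] v s := by rw [Function.iterate_one]
        rw [heq]
        exact le_of_lt (hD1T s (le_of_lt hs))
    set W : ℝ := v t₀ with hWdef
    have hWpos : 0 < W := hvpos t₀ (lt_trans hTpos hTt₀)
    set ε₁ : ℝ := (K/W) ^ (1/α) with hε₁def
    have hε₁pos : 0 < ε₁ := Real.rpow_pos_of_pos (div_pos hKpos hWpos) _
    set ε : ℝ := min ((t₀ - T)/2) (ε₁/2) with hεdef
    have hεpos : 0 < ε := lt_min (by linarith) (by linarith)
    set s₁ : ℝ := t₀ - ε with hs₁def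
    have hs₁lt : s₁ < t₀ := by simp only [hs₁def]; linarith
    have hs₁ge : T ≤ s₁ := by
      have := min_le_left ((t₀ - T)/2) (ε₁/2)
      simp only [hs₁def]
      simp only [hεdef] at *
      linarith
    have hεα : ε ^ α < K/W := by
      have h1 : ε < ε₁ := lt_of_le_of_lt (min_le_right _ _) (by linarith)
      have h2 : ε ^ α < ε₁ ^ α := Real.rpow_lt_rpow (le_of_lt hεpos) h1 hα
      have h3 : ε₁ ^ α = K/W := by
        rw [hε₁def, ← Real.rpow_mul (le_of_lt (div_pos hKpos hWpos)), one_div,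
          inv_mul_cancel₀ (ne_of_gt hα), Real.rpow_one]
      linarith
    have hU0s : W < U0 s₁ := by
      have hts : t₀ - s₁ = ε := by simp only [hs₁def]; ring
      have hεα_pos : 0 < ε ^ α := Real.rpow_pos_of_pos hεpos α
      have : U0 s₁ = K * (ε ^ α)⁻¹ := by
        simp only [hU0def]
        rw [hts, Real.rpow_neg (le_of_lt hεpos)]
      rw [this, ← div_eq_mul_inv, lt_div_iff₀ hεα_pos]
      calc W * ε ^ α < W * (K / W) := mul_lt_mul_of_pos_left hεα hWpos
      _ = K := by field_simp
    have hFs₁ := hclaim s₁ ⟨hs₁ge, hs₁lt⟩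
    have hgapU0 : U0 s₁ < v s₁ := by
      simp only [hFdef] at hFs₁
      have h3 := lt_of_lt_of_le hFs₁ (min_le_left _ _)
      have h4 := lt_of_lt_of_le h3 (min_le_left _ _)
      linarith
    have hvs₁ : v s₁ ≤ W := hvmono (mem_Ici.2 hs₁ge) (mem_Ici.2 (le_of_lt hTt₀))
      (le_of_lt hs₁lt)
    linarith

end
end
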